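/- arXiv:2604.11418 — 2 statements merged into one kernel-verified Lean document; each statement's English description precedes it below -/
import Mathlib

section
/- Let T=∪_{i=1}^k C(X_i) be a complex cone of dimension m∈{1,…,n} that satisfies the non-flat condition, and define its relative interior RI_m(T)={x∈T : T∩B(x,r)=P∩B(x,r) for some r>0 and some m-dimensional affine plane P}. Then RI_m(T)=∪_i C(X_i)°, where C(X_i)° denotes the relative interior of the convex set C(X_i). Moreover, T\RI_m(T)=∪_{Y∈Ω_T, #Y=m−1} C(Y), and this set is a complex cone of dimension m−1 that satisfies the non-flat condition. -/
open Metric Set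
open scoped Classical

noncomputable section

namespace DDTGen

variable {V : Type*} [NormedAddCommGroup V] [InnerProductSpace ℝ V]

/-- The cone over a finite set `X ⊆ V`: all nonnegative linear combinations of
elements of `X`.  For `X = ∅` this is `{0}`. -/
def coneOf (X : Finset V) : Set V :=
  {y | ∃ c : V → ℝ, (∀ v ∈ X, 0 ≤ c v) ∧ y = ∑ v ∈ X, c v • v}

/-- `X` is the base of a simple cone of dimension `m`: `X` consists of `m` unit
vectors and `{0} ∪ X` is affinely independent. -/
def IsSimpleBase (m : ℕ) (X : Finset V) : Prop :=
  X.card = m ∧ (∀ v ∈ X, ‖v‖ = 1) ∧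
    AffineIndependent ℝ (Subtype.val : (insert (0 : V) (X : Set V) : Set V) → V)

/-- A complex cone of dimension `m`: a finite union of distinct simple cones of
dimension `m` such that any two faces intersect in the common sub-face. -/
structure ComplexCone (V : Type*) [NormedAddCommGroup V] [InnerProductSpace ℝ V]
    (m : ℕ) where
  faces : Finset (Finset V)
  faces_nonempty : faces.Nonempty
  simple : ∀ X ∈ faces, IsSimpleBase m X
  inter_eq : ∀ X Y : Finset V, (∃ X' ∈ faces, X ⊆ X') → (∃ Y' ∈ faces, Y ⊆ Y') →
    coneOf X ∩ coneOf Y = coneOf (X ∩ Y)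

namespace ComplexCone

variable {m : ℕ}

/-- membership in `Ω_T`. -/
def inOmega (T : ComplexCone V m) (Y : Finset V) : Prop :=
  ∃ X ∈ T.faces, Y ⊆ X

/-- the underlying set of the complex cone. -/
def carrier (T : ComplexCone V m) : Set V :=
  ⋃ X ∈ T.faces, coneOf X

end ComplexCone

/-- The set of angles `∠(F₁,F₂)` of the paper: angles `∠ f₁ z f₂` with
`z ∈ C(F₁ ∩ F₂)`, `f_j ∈ C(F_j) \ C(F₁ ∩ F₂)` realizing the distance to
`C(F₁ ∩ F₂)` at `z`. -/
def angleSet (F₁ F₂ : Finset V) : Set ℝ :=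
  {θ | ∃ z ∈ coneOf (F₁ ∩ F₂),
      ∃ f₁ ∈ coneOf F₁ \ coneOf (F₁ ∩ F₂),
      ∃ f₂ ∈ coneOf F₂ \ coneOf (F₁ ∩ F₂),
      Metric.infDist f₁ (coneOf (F₁ ∩ F₂)) = dist f₁ z ∧
      Metric.infDist f₂ (coneOf (F₁ ∩ F₂)) = dist f₂ z ∧
      θ = EuclideanGeometry.angle f₁ z f₂}

/-- the non-flat condition for a complex cone. -/
def ComplexCone.NonFlat {m : ℕ} (T : ComplexCone V m) : Prop :=
  ∀ Y Z₁ Z₂ : Finset V, T.inOmega Y → T.inOmega Z₁ → T.inOmega Z₂ →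
    Y.card < m → Y = Z₁ ∩ Z₂ → Z₁.card = Y.card + 1 → Z₂.card = Y.card + 1 →
    sSup (angleSet Z₁ Z₂) < Real.pi

/-- the minimal angle `∠(T)` of a complex cone. -/
def ComplexCone.minAngle {m : ℕ} (T : ComplexCone V m) : ℝ :=
  sInf {θ | ∃ F₁ F₂ : Finset V, T.inOmega F₁ ∧ T.inOmega F₂ ∧
    F₁.Nonempty ∧ F₂.Nonempty ∧ ¬F₁ ⊆ F₂ ∧ ¬F₂ ⊆ F₁ ∧ θ = sInf (angleSet F₁ F₂)}

/-- relative interior of a (convex) set, following the paper's definition. -/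
def relInterior (F : Set V) : Set V :=
  {x | x ∈ F ∧ ∃ r > 0, (affineSpan ℝ F : Set V) ∩ Metric.ball x r ⊆ F}

/-- `RI m T`: points of `T` near which `T` coincides with an `m`-dimensional
affine plane. -/
def RI (m : ℕ) (T : Set V) : Set V :=
  {x | x ∈ T ∧ ∃ r > 0, ∃ Q : AffineSubspace ℝ V, (Q : Set V).Nonempty ∧
      Module.finrank ℝ Q.direction = m ∧
      T ∩ Metric.ball x r = (Q : Set V) ∩ Metric.ball x r}

/-- `π` is the orthogonal (nearest point) projection onto the affine subspace `P`. -/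
def IsOrthProjOnto (P : AffineSubspace ℝ V) (π : V →ᵃ[ℝ] V) : Prop :=
  (∀ y, π y ∈ P) ∧ (∀ p ∈ P, π p = p) ∧
    ∀ y : V, ∀ p ∈ P, inner ℝ (y - π y) (p - π y) = (0 : ℝ)

/-- normalized local Hausdorff distance `d_{x,r}(F₁,F₂)`. -/
def dxr {X : Type*} [PseudoMetricSpace X] (x : X) (r : ℝ) (F₁ F₂ : Set X) : ℝ :=
  (1 / r) * max (⨆ z ∈ F₂ ∩ Metric.ball x r, Metric.infDist z F₁)
                (⨆ z ∈ F₁ ∩ Metric.ball x r, Metric.infDist z F₂)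

/-- the blow-up cone `C(W ∩ B(x,r) − x)`. -/
def blowUp (W : Set V) (x : V) (r : ℝ) : Set V :=
  {y | ∃ c : ℝ, 0 ≤ c ∧ ∃ z ∈ W ∩ Metric.ball x r, y = c • (z - x)}

/-- projection of `ℝ^N` onto the first `N'` coordinates. -/
def proj1 (N' N : ℕ) (y : EuclideanSpace ℝ (Fin N)) : EuclideanSpace ℝ (Fin N') :=
  WithLp.toLp 2 (fun j : Fin N' => if h : (j : ℕ) < N then y ⟨(j : ℕ), h⟩ else 0)

/-- the set `T × ℝ^m × {0}` inside `ℝ^N`, where `T ⊆ ℝ^{N'}` occupies the first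
`N'` coordinates, the `ℝ^m` factor the next `m` coordinates, and the remaining
coordinates vanish. -/
def prodSet (N' N : ℕ) (T : Set (EuclideanSpace ℝ (Fin N'))) (m : ℕ) :
    Set (EuclideanSpace ℝ (Fin N)) :=
  {y | proj1 N' N y ∈ T ∧ ∀ i : Fin N, N' + m ≤ (i : ℕ) → y i = 0}

/-- data describing a set of type `m` in `ℝ^N`:
`W = R (T × ℝ^m × {0})` with `T` a non-flat complex cone of dimension `n−m`
and `R` an isometry of `ℝ^N`. -/
structure TypedCone (n N' N : ℕ) where
  m : ℕ
  m_le : m ≤ n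
  T : ComplexCone (EuclideanSpace ℝ (Fin N')) (n - m)
  nonflat : T.NonFlat
  R : EuclideanSpace ℝ (Fin N) ≃ᵢ EuclideanSpace ℝ (Fin N)

namespace TypedCone

variable {n N' N : ℕ}

/-- the underlying set `R (T × ℝ^m × {0})`. -/
def carrier (C : TypedCone n N' N) : Set (EuclideanSpace ℝ (Fin N)) :=
  C.R '' prodSet N' N C.T.carrier C.m

/-- the `d`-dimensional spine `L^d(W)`. -/
def spine (C : TypedCone n N' N) (d : ℕ) : Set (EuclideanSpace ℝ (Fin N)) :=
  if d < C.m then ∅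
  else C.R '' prodSet N' N
    (⋃ Y ∈ {Y : Finset (EuclideanSpace ℝ (Fin N')) |
        C.T.inOmega Y ∧ Y.card = d - C.m}, coneOf Y) C.m

/-- `L` is a branch of the `d`-dimensional spine of `C`. -/
def IsBranch (C : TypedCone n N' N) (d : ℕ) (L : Set (EuclideanSpace ℝ (Fin N))) : Prop :=
  C.m ≤ d ∧ ∃ Y : Finset (EuclideanSpace ℝ (Fin N')),
    C.T.inOmega Y ∧ Y.card = d - C.m ∧ L = C.R '' prodSet N' N (coneOf Y) C.m

end TypedCone

/-- `W` is a set of type `m` in `ℝ^N`. -/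
def IsTypeM (n N' N m : ℕ) (W : Set (EuclideanSpace ℝ (Fin N))) : Prop :=
  m ≤ n ∧ ∃ C : TypedCone n N' N, C.m = m ∧ C.carrier = W

/-- `𝒯𝒜`: all sets of type `m`, `0 ≤ m ≤ n`. -/
def TA (n N' N : ℕ) : Set (Set (EuclideanSpace ℝ (Fin N))) :=
  {W | ∃ m, IsTypeM n N' N m W}

/-- `𝒜(W)`: all isometric images of (stabilized) blow-up cones of `W`. -/
def calA {N : ℕ} (W : Set (EuclideanSpace ℝ (Fin N))) :
    Set (Set (EuclideanSpace ℝ (Fin N))) :=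
  {Z | ∃ R : EuclideanSpace ℝ (Fin N) ≃ᵢ EuclideanSpace ℝ (Fin N),
      ∃ x ∈ W, ∃ r : ℝ, 0 < r ∧
        (∀ r' : ℝ, 0 < r' → r' ≤ r → blowUp W x r' = blowUp W x r) ∧
        Z = R '' blowUp W x r}

/-- `𝒜(ℬ) = ∪_{W ∈ ℬ} 𝒜(W)`. -/
def calAB {N : ℕ} (ℬ : Set (Set (EuclideanSpace ℝ (Fin N)))) :
    Set (Set (EuclideanSpace ℝ (Fin N))) :=
  ⋃ W ∈ ℬ, calA W

/-- `W₁ ∼ W₂` iff they differ by an isometry of `ℝ^N`. -/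
def EquivIso {N : ℕ} (W₁ W₂ : Set (EuclideanSpace ℝ (Fin N))) : Prop :=
  ∃ R : EuclideanSpace ℝ (Fin N) ≃ᵢ EuclideanSpace ℝ (Fin N), W₁ = R '' W₂

/-- `ℬ/∼` is finite: `ℬ` is covered by finitely many isometry classes. -/
def FiniteModIso {N : ℕ} (ℬ : Set (Set (EuclideanSpace ℝ (Fin N)))) : Prop :=
  ∃ S : Set (Set (EuclideanSpace ℝ (Fin N))), S.Finite ∧ ∀ W ∈ ℬ, ∃ W₀ ∈ S, EquivIso W W₀

/-- the minimal angle constant `α(ℬ)`. -/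
def alphaB (n N' N : ℕ) (ℬ : Set (Set (EuclideanSpace ℝ (Fin N)))) : ℝ :=
  sInf {a | ∃ C : TypedCone n N' N, C.carrier ∈ calAB ℬ ∧ a = C.T.minAngle}

/-- `δ₀` is a cone-separation constant for `ℬ` (Proposition 2.10). -/
def SepConst (n N' N : ℕ) (ℬ : Set (Set (EuclideanSpace ℝ (Fin N)))) (δ₀ : ℝ) : Prop :=
  0 < δ₀ ∧ ∀ t : ℕ, t ≤ n - 1 →
    ∀ C : TypedCone n N' N, C.carrier ∈ calAB ℬ → C.m ≤ t →
    ∀ x ∈ C.spine t, ∀ W ∈ calAB ℬ,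
      (∃ k, t + 1 ≤ k ∧ k ≤ n ∧ IsTypeM n N' N k W) →
      ∀ r : ℝ, 0 < r → dxr x r C.carrier W > δ₀

/-- `n₀` is a cone-replacement constant for `ℬ` (Proposition 2.11). -/
def RepConst (n N' N : ℕ) (ℬ : Set (Set (EuclideanSpace ℝ (Fin N)))) (n₀ : ℝ) : Prop :=
  10 < n₀ ∧ ∀ t : ℕ, t ≤ n - 1 →
    ∀ C : TypedCone n N' N, C.carrier ∈ calAB ℬ → C.m ≤ t →
    ∀ (x : EuclideanSpace ℝ (Fin N)) (r : ℝ), 0 < r →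
      (C.carrier ∩ Metric.ball x r).Nonempty →
      Metric.ball x (n₀ * r) ∩ C.spine t = ∅ →
      ∃ Y ∈ calAB ℬ, (∃ u, t + 1 ≤ u ∧ u ≤ n ∧ IsTypeM n N' N u Y) ∧
        C.carrier ∩ Metric.ball x r = Y ∩ Metric.ball x r

/-- `a_m(x,r)`: the infimum of `d_{x,r}(E,W)` over sets `W ∈ 𝒜(ℬ)` of type `m`
whose `m`-spine passes through `x`. -/
def aM (n N' N : ℕ) (ℬ : Set (Set (EuclideanSpace ℝ (Fin N))))
    (E : Set (EuclideanSpace ℝ (Fin N))) (m : ℕ)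
    (x : EuclideanSpace ℝ (Fin N)) (r : ℝ) : ℝ :=
  sInf {d | ∃ C : TypedCone n N' N, C.m = m ∧ C.carrier ∈ calAB ℬ ∧ x ∈ C.spine m ∧
      d = dxr x r E C.carrier}

/-- the stratum `E_m`. -/
def Estrat (n N' N : ℕ) (ℬ : Set (Set (EuclideanSpace ℝ (Fin N))))
    (E : Set (EuclideanSpace ℝ (Fin N))) (C₀ ε : ℝ) (m : ℕ) :
    Set (EuclideanSpace ℝ (Fin N)) :=
  {x | x ∈ E ∩ Metric.ball 0 2 ∧
      ∃ rx > 0, ∀ r : ℝ, 0 < r → r < rx → aM n N' N ℬ E m x r < C₀ * ε}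

end DDTGen
namespace DDTGen

section Tools

variable {V : Type*} [NormedAddCommGroup V] [InnerProductSpace ℝ V]

lemma zero_mem_coneOf (X : Finset V) : (0 : V) ∈ coneOf X :=
  ⟨fun _ => 0, fun _ _ => le_rfl, by simp⟩

lemma mem_coneOf_of_mem {X : Finset V} {v : V} (hv : v ∈ X) : v ∈ coneOf X := by
  refine ⟨fun u => if u = v then 1 else 0, fun u _ => by positivity, ?_⟩
  rw [Finset.sum_eq_single v]
  · simp
  · intro b _ hb; simp [hb]
  · intro h; exact absurd hv h

lemma coneOf_mono {X Y : Finset V} (h : Y ⊆ X) : coneOf Y ⊆ coneOf X := by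
  rintro x ⟨c, hc, rfl⟩
  refine ⟨fun u => if u ∈ Y then c u else 0, fun u _ => ?_, ?_⟩
  · dsimp only; split_ifs with h'
    exacts [hc _ h', le_rfl]
  · rw [← Finset.sum_subset h]
    · exact Finset.sum_congr rfl fun u hu => by simp [hu]
    · intro u _ hu; simp [hu]

lemma coneOf_subset_span (X : Finset V) :
    coneOf X ⊆ (Submodule.span ℝ (X : Set V) : Set V) := by
  rintro x ⟨c, _, rfl⟩
  exact Submodule.sum_mem _ fun v hv =>
    Submodule.smul_mem _ _ (Submodule.subset_span hv)

/-- linear independence from a simple base. -/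
lemma IsSimpleBase.linIndep {m : ℕ} {X : Finset V} (hX : IsSimpleBase m X) :
    LinearIndependent ℝ (fun v : {x // x ∈ X} => (v : V)) := by
  obtain ⟨-, hnorm, haff⟩ := hX
  have h0 : (0 : V) ∈ insert (0 : V) (X : Set V) := Set.mem_insert _ _
  rw [affineIndependent_iff_linearIndependent_vsub ℝ _ ⟨0, h0⟩] at haff
  have hne : ∀ v : {x // x ∈ X}, (v : V) ≠ 0 := by
    intro v h
    have := hnorm v v.2
    rw [h] at this; simp at this
  let f : {x // x ∈ X} → {i : (insert (0:V) (X : Set V) : Set V) // i ≠ ⟨0, h0⟩} :=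
    fun v => ⟨⟨(v : V), Set.mem_insert_of_mem _ v.2⟩, by
      intro h
      exact hne v (by simpa using congrArg Subtype.val h)⟩
  have hfinj : Function.Injective f := by
    intro a b hab
    apply Subtype.ext
    simpa [f] using congrArg (fun z => ((z : (insert (0:V) (X : Set V) : Set V))) : _ → V) (congrArg Subtype.val hab)
  have := haff.comp f hfinj
  convert this using 1
  funext v
  simp [f]
  rfl

/-- uniqueness of coefficients over a linearly independent finset. -/
lemma coeff_unique {X : Finset V}
    (hX : LinearIndependent ℝ (fun v : {x // x ∈ X} => (v : V)))
    {c d : V → ℝ} (h : ∑ v ∈ X, c v • v = ∑ v ∈ X, d v • v) :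
    ∀ v ∈ X, c v = d v := by
  have h' : ∑ v ∈ X.attach, (c v - d v) • (v : V) = 0 := by
    simp only [sub_smul, Finset.sum_sub_distrib]
    rw [sub_eq_zero]
    rw [← Finset.sum_attach X (fun v => c v • v), ← Finset.sum_attach X (fun v => d v • v)] at h
    exact h
  intro v hv
  have h2 := linearIndependent_iff'.1 hX X.attach (fun v => c v - d v) h' ⟨v, hv⟩
    (Finset.mem_attach _ _)
  have : c v - d v = 0 := by simpa using h2
  linarith

end Tools

end DDTGen
namespace DDTGen

section Tools2

variable {V : Type*} [NormedAddCommGroup V] [InnerProductSpace ℝ V]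

/-- the summation linear map from coefficients to `V`. -/
def sumMap (X : Finset V) : ({x // x ∈ X} → ℝ) →ₗ[ℝ] V where
  toFun c := ∑ v ∈ X.attach, c v • (v : V)
  map_add' c d := by simp [add_smul, Finset.sum_add_distrib]
  map_smul' r c := by simp [Finset.smul_sum, mul_smul]

lemma sumMap_apply (X : Finset V) (c : V → ℝ) :
    sumMap X (fun v => c v) = ∑ v ∈ X, c v • v := by
  simp only [sumMap, LinearMap.coe_mk, AddHom.coe_mk]
  exact Finset.sum_attach X (fun v => c v • v)

lemma coneOf_eq_image (X : Finset V) :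
    coneOf X = (sumMap X) '' {c | ∀ v, 0 ≤ c v} := by
  ext x
  constructor
  · rintro ⟨c, hc, rfl⟩
    refine ⟨fun v => c v, fun v => hc v v.2, ?_⟩
    exact sumMap_apply X c
  · rintro ⟨c, hc, rfl⟩
    classical
    refine ⟨fun v => if h : v ∈ X then c ⟨v, h⟩ else 0, fun v hv => by simp only [dif_pos hv]; exact hc ⟨v, hv⟩, ?_⟩
    show (∑ v ∈ X.attach, c v • (v : V)) = _
    rw [← Finset.sum_attach X (fun v => (if h : v ∈ X then c ⟨v, h⟩ else 0) • v)]
    exact Finset.sum_congr rfl fun v _ => by simp [v.2]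

lemma sumMap_injective {X : Finset V}
    (hX : LinearIndependent ℝ (fun v : {x // x ∈ X} => (v : V))) :
    Function.Injective (sumMap X) := by
  rw [← LinearMap.ker_eq_bot]
  rw [LinearMap.ker_eq_bot']
  intro c hc
  have h0 : ∑ v ∈ X.attach, c v • (v : V) = 0 := hc
  funext v
  have := linearIndependent_iff'.1 hX X.attach c (by
    rwa [Finset.attach_eq_univ] at h0 ⊢) v (Finset.mem_attach _ _)
  exact this

lemma isClosed_coneOf [FiniteDimensional ℝ V] {X : Finset V}
    (hX : LinearIndependent ℝ (fun v : {x // x ∈ X} => (v : V))) :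
    IsClosed (coneOf X) := by
  rw [coneOf_eq_image]
  have hker : LinearMap.ker (sumMap X) = ⊥ :=
    LinearMap.ker_eq_bot.2 (sumMap_injective hX)
  have hemb := LinearMap.isClosedEmbedding_of_injective hker
  have hK : IsClosed {c : {x // x ∈ X} → ℝ | ∀ v, 0 ≤ c v} := by
    have : {c : {x // x ∈ X} → ℝ | ∀ v, 0 ≤ c v} = ⋂ v, {c | 0 ≤ c v} := by
      ext c; simp [Set.mem_iInter]
    rw [this]
    exact isClosed_iInter fun v => isClosed_le continuous_const (continuous_apply v)
  exact hemb.isClosedMap _ hK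

lemma affineSpan_coneOf (X : Finset V) :
    (affineSpan ℝ (coneOf X) : Set V) = (Submodule.span ℝ (X : Set V) : Set V) := by
  apply Set.Subset.antisymm
  · intro y hy
    have h1 : affineSpan ℝ (coneOf X) ≤ (Submodule.span ℝ (X : Set V)).toAffineSubspace := by
      rw [affineSpan_le]
      intro z hz
      exact coneOf_subset_span X hz
    exact h1 hy
  · intro y hy
    have h0 : (0 : V) ∈ affineSpan ℝ (coneOf X) := subset_affineSpan ℝ _ (zero_mem_coneOf X)
    have hdir : Submodule.span ℝ (X : Set V) ≤ (affineSpan ℝ (coneOf X)).direction := by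
      rw [Submodule.span_le]
      intro v hv
      have hvmem : v ∈ affineSpan ℝ (coneOf X) := subset_affineSpan ℝ _ (mem_coneOf_of_mem hv)
      have := AffineSubspace.vsub_mem_direction hvmem h0
      simpa using this
    have : y -ᵥ (0:V) ∈ (affineSpan ℝ (coneOf X)).direction := hdir (by simpa using hy)
    have := AffineSubspace.vadd_mem_of_mem_direction this h0
    simpa using this

end Tools2

end DDTGen
namespace DDTGen

section Tools3

variable {V : Type*} [NormedAddCommGroup V] [InnerProductSpace ℝ V]

lemma range_coe_finset (X : Finset V) :
    Set.range (fun v : {x // x ∈ X} => (v : V)) = (X : Set V) := by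
  ext u
  constructor
  · rintro ⟨v, rfl⟩; exact v.2
  · intro hu; exact ⟨⟨u, hu⟩, rfl⟩

/-- positive coefficients give a point of the relative interior. -/
lemma mem_relInterior_of_pos [FiniteDimensional ℝ V] {X : Finset V}
    (hX : LinearIndependent ℝ (fun v : {x // x ∈ X} => (v : V)))
    {c : V → ℝ} (hc : ∀ v ∈ X, 0 < c v) :
    (∑ v ∈ X, c v • v) ∈ relInterior (coneOf X) := by
  classical
  set x : V := ∑ v ∈ X, c v • v with hxdef
  have hxcone : x ∈ coneOf X := ⟨c, fun v hv => (hc v hv).le, rfl⟩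
  refine ⟨hxcone, ?_⟩
  -- set up the basis of the span
  set S : Submodule ℝ V := Submodule.span ℝ (Set.range (fun v : {x // x ∈ X} => (v : V)))
    with hSdef
  have hSX : S = Submodule.span ℝ (X : Set V) := by rw [hSdef, range_coe_finset]
  let B : Module.Basis {x // x ∈ X} ℝ S := Module.Basis.span hX
  have hBapp : ∀ v : {x // x ∈ X}, (B v : V) = (v : V) := fun v => congrArg Subtype.val (Module.Basis.span_apply hX v)
  have hxS : x ∈ S := by
    rw [hSX]; exact coneOf_subset_span X hxcone
  -- the coordinate map is continuous
  have hcont : Continuous (fun z : S => B.equivFun z) := by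
    have := LinearMap.continuous_of_finiteDimensional B.equivFun.toLinearMap; exact this
  -- the positivity region is open
  have hO : IsOpen {z : S | ∀ v : {x // x ∈ X}, 0 < B.equivFun z v} := by
    have : {z : S | ∀ v : {x // x ∈ X}, 0 < B.equivFun z v}
        = ⋂ v : {x // x ∈ X}, (fun z : S => B.equivFun z v) ⁻¹' (Set.Ioi 0) := by
      ext z; simp [Set.mem_iInter]
    rw [this]
    exact isOpen_iInter_of_finite fun v =>
      (isOpen_Ioi).preimage ((continuous_apply v).comp hcont)
  -- x as an element of S, with coordinates `c`
  have hxc : (⟨x, hxS⟩ : S) = B.equivFun.symm (fun v => c v) := by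
    apply Subtype.ext
    rw [Module.Basis.equivFun_symm_apply]
    push_cast
    simp only [hBapp]
    rw [hxdef]
    rw [← Finset.sum_attach X (fun v => c v • v)]
    simp
  have hxO : (⟨x, hxS⟩ : S) ∈ {z : S | ∀ v : {x // x ∈ X}, 0 < B.equivFun z v} := by
    intro v
    rw [hxc]
    simp only [LinearEquiv.apply_symm_apply]
    exact hc v v.2
  obtain ⟨ε, hε, hball⟩ := Metric.isOpen_iff.1 hO _ hxO
  refine ⟨ε, hε, ?_⟩
  rintro y ⟨hy1, hy2⟩
  rw [affineSpan_coneOf] at hy1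
  have hyS : y ∈ S := by rw [hSX]; exact hy1
  have hyb : (⟨y, hyS⟩ : S) ∈ Metric.ball (⟨x, hxS⟩ : S) ε := by
    rw [Metric.mem_ball] at hy2 ⊢
    rw [Subtype.dist_eq]
    exact hy2
  have hyO := hball hyb
  set d : {x // x ∈ X} → ℝ := B.equivFun ⟨y, hyS⟩ with hddef
  have hy' : (⟨y, hyS⟩ : S) = B.equivFun.symm d := by
    rw [hddef, LinearEquiv.symm_apply_apply]
  refine ⟨fun v => if h : v ∈ X then d ⟨v, h⟩ else 0, fun v hv => by
      simp only [dif_pos hv]; exact (hyO ⟨v, hv⟩).le, ?_⟩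
  have := congrArg (Subtype.val : S → V) hy'
  rw [Module.Basis.equivFun_symm_apply] at this
  push_cast at this
  simp only [hBapp] at this
  rw [this]
  rw [← Finset.sum_attach X (fun v => (if h : v ∈ X then d ⟨v, h⟩ else 0) • v)]
  exact Finset.sum_congr rfl fun v _ => by simp [v.2]

/-- extension of a representation over a subset to the whole finset. -/
lemma sum_extend {Z X : Finset V} (hZX : Z ⊆ X) (c : V → ℝ) :
    ∑ v ∈ X, (if v ∈ Z then c v else 0) • v = ∑ v ∈ Z, c v • v := by
  classical
  rw [← Finset.sum_subset hZX]
  · exact Finset.sum_congr rfl fun v hv => by simp [hv]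
  · intro v _ hv; simp [hv]

/-- the relative interior is disjoint from cones over proper subsets. -/
lemma relInterior_coneOf_disjoint {X Z : Finset V}
    (hX : LinearIndependent ℝ (fun v : {x // x ∈ X} => (v : V)))
    (hZX : Z ⊆ X) (hne : Z ≠ X) {x : V}
    (hxr : x ∈ relInterior (coneOf X)) (hxZ : x ∈ coneOf Z) : False := by
  classical
  obtain ⟨hxX, r, hr, hball⟩ := hxr
  obtain ⟨v, hvX, hvZ⟩ := Finset.exists_of_ssubset (lt_of_le_of_ne hZX hne)
  have hv0 : (v : V) ≠ 0 := hX.ne_zero ⟨v, hvX⟩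
  have hnv : 0 < ‖v‖ := norm_pos_iff.2 hv0
  set δ : ℝ := r / (2 * ‖v‖) with hδdef
  have hδ : 0 < δ := by positivity
  have hyspan : x - δ • v ∈ (affineSpan ℝ (coneOf X) : Set V) := by
    rw [affineSpan_coneOf]
    exact Submodule.sub_mem _ (coneOf_subset_span X hxX)
      (Submodule.smul_mem _ _ (Submodule.subset_span hvX))
  have hyball : x - δ • v ∈ Metric.ball x r := by
    rw [Metric.mem_ball, dist_eq_norm]
    have : x - δ • v - x = -(δ • v) := by abel
    rw [this, norm_neg, norm_smul, Real.norm_eq_abs, abs_of_pos hδ, hδdef]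
    rw [div_mul_eq_mul_div]
    rw [div_lt_iff₀ (by positivity)]
    nlinarith
  obtain ⟨d, hd, hdsum⟩ := hball ⟨hyspan, hyball⟩
  obtain ⟨c, hc, hcsum⟩ := hxZ
  -- compare coefficients over X
  have hrep : ∑ u ∈ X, ((if u ∈ Z then c u else 0) - (if u = v then δ else 0)) • u
      = ∑ u ∈ X, d u • u := by
    simp only [sub_smul, Finset.sum_sub_distrib]
    rw [sum_extend hZX c, ← hcsum]
    have : ∑ u ∈ X, (if u = v then δ else 0) • u = δ • v := by
      rw [Finset.sum_eq_single v]
      · simp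
      · intro b _ hb; simp [hb]
      · intro h; exact absurd hvX h
    rw [this, ← hdsum]
  have hkey := coeff_unique hX hrep v hvX
  simp [hvZ] at hkey
  have hdv := hd v hvX
  linarith

end Tools3

end DDTGen
namespace DDTGen

section Tools4

variable {V : Type*} [NormedAddCommGroup V] [InnerProductSpace ℝ V]

/-- nearest-point property along orthogonal directions. -/
lemma infDist_eq_of_orth {Y : Finset V} {P : Submodule ℝ V}
    (hYP : coneOf Y ⊆ (P : Set V)) {z f : V}
    (hz : z ∈ coneOf Y) (horth : f - z ∈ Pᗮ) :
    Metric.infDist f (coneOf Y) = dist f z := by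
  refine le_antisymm (Metric.infDist_le_dist_of_mem hz) ?_
  by_contra hlt
  push_neg at hlt
  obtain ⟨y', hy', hy'lt⟩ := (Metric.infDist_lt_iff ⟨z, hz⟩).1 hlt
  have hsq : ‖f - y'‖ ^ 2 = ‖f - z‖ ^ 2 + ‖z - y'‖ ^ 2 := by
    have hdec : f - y' = (f - z) + (z - y') := by abel
    rw [hdec, norm_add_sq_real]
    have hinner : inner ℝ (f - z) (z - y') = (0 : ℝ) := by
      have hmem : z - y' ∈ P := Submodule.sub_mem _ (hYP hz) (hYP hy')
      exact (Submodule.mem_orthogonal' P (f - z)).1 horth _ hmem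
    rw [hinner]; ring
  have h1 : dist f z ≤ dist f y' := by
    rw [dist_eq_norm, dist_eq_norm]
    nlinarith [norm_nonneg (f - y'), norm_nonneg (f - z), sq_nonneg (‖z - y'‖)]
  linarith
lemma exists_delta (Y : Finset V) (c a : V → ℝ) (hc : ∀ y ∈ Y, 0 < c y)
    {ε : ℝ} (hε : 0 < ε) :
    ∃ δ : ℝ, 0 < δ ∧ δ ≤ ε ∧ ∀ y ∈ Y, |δ * a y| ≤ c y / 4 := by
  classical
  induction Y using Finset.induction_on with
  | empty => exact ⟨ε, hε, le_rfl, fun y hy => absurd hy (Finset.notMem_empty y)⟩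
  | @insert y₀ s hy₀ ih =>
    obtain ⟨δ, hδ, hδε, hδb⟩ := ih (fun y hy => hc y (Finset.mem_insert_of_mem hy))
    have hcy₀ : 0 < c y₀ := hc y₀ (Finset.mem_insert_self _ _)
    refine ⟨min δ (c y₀ / (4 * (|a y₀| + 1))), lt_min hδ (by positivity), le_trans (min_le_left _ _) hδε, ?_⟩
    intro y hy
    rcases Finset.mem_insert.1 hy with rfl | hys
    · have h1 : min δ (c y / (4 * (|a y| + 1))) ≤ c y / (4 * (|a y| + 1)) := min_le_right _ _
      rw [abs_mul, abs_of_pos (lt_min hδ (by positivity))]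
      have h2 : min δ (c y / (4 * (|a y| + 1))) * |a y| ≤ c y / (4 * (|a y| + 1)) * |a y| :=
        mul_le_mul_of_nonneg_right h1 (abs_nonneg _)
      refine le_trans h2 ?_
      rw [div_mul_eq_mul_div, div_le_div_iff₀ (by positivity) (by norm_num)]
      nlinarith [abs_nonneg (a y)]
    · have h2 := hδb y hys
      rw [abs_mul] at h2 ⊢
      rw [abs_of_pos (lt_min hδ (by positivity)), abs_of_pos hδ] at *
      calc min δ (c y₀ / (4 * (|a y₀| + 1))) * |a y| ≤ δ * |a y| :=
            mul_le_mul_of_nonneg_right (min_le_left _ _) (abs_nonneg _)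
        _ ≤ c y / 4 := h2

/-- opposite rays make angle `π`. -/
lemma angle_eq_pi_smul {q : V} (hq : q ≠ 0) {s t : ℝ} (hs : 0 < s) (ht : t < 0) :
    InnerProductGeometry.angle (s • q) (t • q) = Real.pi := by
  rw [InnerProductGeometry.angle_smul_left_of_pos _ _ hs]
  rw [InnerProductGeometry.angle_smul_right_of_neg _ _ ht]
  rw [InnerProductGeometry.angle_neg_right, InnerProductGeometry.angle_self hq]
  ring

/-- If `π` belongs to the angle set, its `sSup` is `π`. -/
lemma sSup_angleSet_eq_pi {F₁ F₂ : Finset V} (h : Real.pi ∈ angleSet F₁ F₂) :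
    sSup (angleSet F₁ F₂) = Real.pi := by
  have hbdd : ∀ θ ∈ angleSet F₁ F₂, θ ≤ Real.pi := by
    rintro θ ⟨z, _, f₁, _, f₂, _, _, _, rfl⟩
    exact EuclideanGeometry.angle_le_pi _ _ _
  exact le_antisymm (csSup_le ⟨_, h⟩ hbdd) (le_csSup ⟨Real.pi, hbdd⟩ h)

/-- zero coefficient: drop a vector. -/
lemma mem_coneOf_erase {X : Finset V} {c : V → ℝ} {v₀ : V} (hv₀ : v₀ ∈ X)
    (hc : ∀ v ∈ X, 0 ≤ c v) (hc0 : c v₀ = 0) :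
    (∑ v ∈ X, c v • v) ∈ coneOf (X.erase v₀) := by
  refine ⟨c, fun v hv => hc v (Finset.mem_of_mem_erase hv), ?_⟩
  rw [Finset.sum_erase]
  rw [hc0, zero_smul]

end Tools4

end DDTGen
namespace DDTGen

section Tools5

variable {V : Type*} [NormedAddCommGroup V] [InnerProductSpace ℝ V]

lemma sum_add_single {X : Finset V} (c : V → ℝ) {v : V} (hv : v ∈ X) (δ : ℝ) :
    ∑ u ∈ X, (c u + if u = v then δ else 0) • u = (∑ u ∈ X, c u • u) + δ • v := by
  simp only [add_smul, Finset.sum_add_distrib]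
  congr 1
  rw [Finset.sum_eq_single v]
  · simp
  · intro b _ hb; simp [hb]
  · intro h; exact absurd hv h

lemma sum_smul_smul {Y : Finset V} (a : V → ℝ) (δ : ℝ) :
    ∑ u ∈ Y, (δ * a u) • u = δ • ∑ u ∈ Y, a u • u := by
  rw [Finset.smul_sum]
  exact Finset.sum_congr rfl fun u _ => by rw [smul_smul]

lemma mem_coneOf_insert {Y : Finset V} {w : V} (hwY : w ∉ Y) {β : ℝ} (hβ : 0 ≤ β)
    {cc : V → ℝ} (hcc : ∀ y ∈ Y, 0 ≤ cc y) :
    (β • w + ∑ u ∈ Y, cc u • u) ∈ coneOf (insert w Y) := by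
  classical
  refine ⟨fun u => if u = w then β else cc u, ?_, ?_⟩
  · intro u hu
    dsimp only
    split_ifs with h
    · exact hβ
    · rcases Finset.mem_insert.1 hu with rfl | huY
      · exact absurd rfl h
      · exact hcc u huY
  · rw [Finset.sum_insert hwY]
    simp only [if_pos rfl]
    congr 1
    refine Finset.sum_congr rfl fun u hu => ?_
    have hne : u ≠ w := fun h => hwY (h ▸ hu)
    rw [if_neg hne]

lemma main_contradiction [FiniteDimensional ℝ V] [CompleteSpace V] {m : ℕ}
    (T : ComplexCone V m) (hT : T.NonFlat) (hm : 1 ≤ m)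
    {X : Finset V} (hX : X ∈ T.faces) {v : V} (hv : v ∈ X)
    {c : V → ℝ} (hc : ∀ y ∈ X.erase v, 0 < c y)
    {x : V} (hx : x = ∑ y ∈ X.erase v, c y • y)
    {Q : AffineSubspace ℝ V} {r : ℝ} (hr : 0 < r)
    (hloc : T.carrier ∩ Metric.ball x r = (Q : Set V) ∩ Metric.ball x r) :
    False := by
  classical
  obtain ⟨hXcard, hXnorm, -⟩ := T.simple X hX
  have hXli := (T.simple X hX).linIndep
  set Y : Finset V := X.erase v with hYdef
  have hvY : v ∉ Y := Finset.notMem_erase v X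
  have hYX : Y ⊆ X := Finset.erase_subset v X
  have hins : insert v Y = X := Finset.insert_erase hv
  have hYcard : Y.card = m - 1 := by rw [hYdef, Finset.card_erase_of_mem hv, hXcard]
  -- the representation of x over X
  set cX : V → ℝ := fun u => if u ∈ Y then c u else 0 with hcXdef
  have hxX : x = ∑ u ∈ X, cX u • u := by rw [hx, sum_extend hYX]
  have hcXnn : ∀ u ∈ X, 0 ≤ cX u := by
    intro u _; rw [hcXdef]; dsimp only; split_ifs with h
    exacts [(hc u h).le, le_rfl]
  have hxcone : x ∈ coneOf X := ⟨cX, hcXnn, hxX⟩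
  have hxconeY : x ∈ coneOf Y := ⟨c, fun y hy => (hc y hy).le, hx⟩
  have hxT : x ∈ T.carrier := Set.mem_biUnion hX hxcone
  have hxQ : x ∈ (Q : Set V) :=
    (hloc.subset ⟨hxT, Metric.mem_ball_self hr⟩).1
  have hnormv : ‖v‖ = 1 := hXnorm v hv
  -- every element of X lies in the direction of Q
  have hdirX : ∀ u ∈ X, u ∈ Q.direction := by
    intro u hu
    have hnu : ‖u‖ = 1 := hXnorm u hu
    have hpt : x + (r/2) • u ∈ coneOf X :=
      ⟨fun w => cX w + if w = u then r/2 else 0, fun w hw => by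
        have := hcXnn w hw
        dsimp only; split_ifs <;> linarith, by rw [sum_add_single cX hu, ← hxX]⟩
    have hptb : x + (r/2) • u ∈ Metric.ball x r := by
      rw [Metric.mem_ball, dist_eq_norm]
      have : x + (r/2) • u - x = (r/2) • u := by abel
      rw [this, norm_smul, Real.norm_eq_abs, abs_of_pos (by positivity), hnu]
      linarith
    have hptQ : x + (r/2) • u ∈ (Q : Set V) :=
      (hloc.subset ⟨Set.mem_biUnion hX hpt, hptb⟩).1
    have hd : (x + (r/2) • u) -ᵥ x ∈ Q.direction :=
      AffineSubspace.vsub_mem_direction hptQ hxQ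
    have hd' : (r/2) • u ∈ Q.direction := by
      have : (x + (r/2) • u) -ᵥ x = (r/2) • u := by
        rw [vsub_eq_sub]; abel
      rwa [this] at hd
    have := Q.direction.smul_mem (2/r) hd'
    rwa [smul_smul, div_mul_div_comm, mul_comm 2 r, div_self (by positivity), one_smul] at this
  -- the sequence of points x - δ v, and the face X' through them
  have hmem : ∀ k : ℕ, x - (r/(2*(k+1))) • v ∈ T.carrier := by
    intro k
    have hδk : 0 < r/(2*((k:ℝ)+1)) := by positivity
    have hQmem : x - (r/(2*(k+1))) • v ∈ (Q : Set V) := by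
      have h1 : (-(r/(2*((k:ℝ)+1)))) • v ∈ Q.direction :=
        Q.direction.smul_mem _ (hdirX v hv)
      have := AffineSubspace.vadd_mem_of_mem_direction h1 hxQ
      have heq : (-(r/(2*((k:ℝ)+1)))) • v +ᵥ x = x - (r/(2*(k+1))) • v := by
        rw [vadd_eq_add, neg_smul]; abel
      rwa [heq] at this
    have hball : x - (r/(2*(k+1))) • v ∈ Metric.ball x r := by
      rw [Metric.mem_ball, dist_eq_norm]
      have : x - (r/(2*((k:ℝ)+1))) • v - x = -((r/(2*((k:ℝ)+1))) • v) := by abel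
      rw [this, norm_neg, norm_smul, Real.norm_eq_abs, abs_of_pos (by positivity), hnormv]
      have hk1 : (1:ℝ) ≤ (k:ℝ) + 1 := by
        have := Nat.cast_nonneg (α := ℝ) k; linarith
      rw [mul_one]
      calc r/(2*((k:ℝ)+1)) ≤ r/2 := by
            apply div_le_div_of_nonneg_left hr.le (by norm_num)
            nlinarith
        _ < r := by linarith
    exact (hloc.symm.subset ⟨hQmem, hball⟩).1
  have hface : ∀ k : ℕ, ∃ F : Finset V, F ∈ T.faces ∧
      x - (r/(2*(k+1))) • v ∈ coneOf F := by
    intro k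
    obtain ⟨F, hF, hmemF⟩ := Set.mem_iUnion₂.1 (hmem k)
    exact ⟨F, hF, hmemF⟩
  choose g hg1 hg2 using hface
  have : ∃ F : {F // F ∈ T.faces}, (Set.preimage (fun k => (⟨g k, hg1 k⟩ : {F // F ∈ T.faces})) {F}).Infinite := by
    obtain ⟨F, hF⟩ := Finite.exists_infinite_fiber (fun k : ℕ => (⟨g k, hg1 k⟩ : {F // F ∈ T.faces}))
    exact ⟨F, Set.infinite_coe_iff.1 hF⟩
  obtain ⟨⟨X', hX'⟩, hfiber⟩ := this
  have hX'li := (T.simple X' hX').linIndep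
  have hX'card := (T.simple X' hX').1
  have hgX' : ∀ k ∈ (Set.preimage (fun k => (⟨g k, hg1 k⟩ : {F // F ∈ T.faces})) {(⟨X', hX'⟩ : {F // F ∈ T.faces})}), x - (r/(2*(k+1))) • v ∈ coneOf X' := by
    intro k hk
    have : g k = X' := congrArg Subtype.val hk
    rw [← this]; exact hg2 k
  -- x belongs to the (closed) cone over X'
  have hxX' : x ∈ coneOf X' := by
    have hcl : IsClosed (coneOf X') := isClosed_coneOf hX'li
    rw [← hcl.closure_eq]
    rw [Metric.mem_closure_iff]
    intro ε hε
    obtain ⟨k, hk, hklt⟩ := hfiber.exists_gt (Nat.ceil (r / (2*ε)))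
    refine ⟨x - (r/(2*(k+1))) • v, hgX' k hk, ?_⟩
    rw [dist_eq_norm]
    have : x - (x - (r/(2*((k:ℝ)+1))) • v) = (r/(2*((k:ℝ)+1))) • v := by abel
    rw [this, norm_smul, Real.norm_eq_abs, abs_of_pos (by positivity), hnormv, mul_one]
    have hge : (r / (2*ε) : ℝ) ≤ (k:ℝ) := Nat.ceil_le.1 (le_of_lt hklt)
    have h2 : r ≤ (k:ℝ) * (2*ε) := by
      rw [div_le_iff₀ (by positivity)] at hge; linarith
    rw [div_lt_iff₀ (by positivity)]
    nlinarith
  -- Y is contained in X'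
  have hYX' : Y ⊆ X' := by
    have hxinter : x ∈ coneOf (X ∩ X') := by
      rw [← T.inter_eq X X' ⟨X, hX, subset_rfl⟩ ⟨X', hX', subset_rfl⟩]
      exact ⟨hxcone, hxX'⟩
    obtain ⟨e, he, hesum⟩ := hxinter
    have hextend : x = ∑ u ∈ X, (if u ∈ X ∩ X' then e u else 0) • u := by
      rw [sum_extend (Finset.inter_subset_left) e, ← hesum]
    have huniq := coeff_unique hXli (hxX.symm.trans hextend)
    intro y hy
    have hyX : y ∈ X := hYX hy
    have h1 := huniq y hyX
    have h2 : cX y = c y := by rw [hcXdef]; simp [hy]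
    by_contra hyX'
    have : y ∉ X ∩ X' := by simp [hyX']
    rw [h2, if_neg this] at h1
    exact absurd h1 (ne_of_gt (hc y hy))
  -- pick one point in the fiber
  obtain ⟨k₀, hk₀, -⟩ := hfiber.exists_gt 0
  set δs : ℝ := r/(2*((k₀:ℝ)+1)) with hδsdef
  have hδs : 0 < δs := by positivity
  have hpmem : x - δs • v ∈ coneOf X' := hgX' k₀ hk₀
  obtain ⟨d, hd, hdsum⟩ := hpmem
  -- v is not in X'
  have hvX' : v ∉ X' := by
    intro hvin
    have hxX'rep : x = ∑ u ∈ X', (if u ∈ Y then c u else 0) • u := by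
      rw [sum_extend hYX' c, ← hx]
    have hrep : ∑ u ∈ X', ((if u ∈ Y then c u else 0) - (if u = v then δs else 0)) • u
        = ∑ u ∈ X', d u • u := by
      simp only [sub_smul, Finset.sum_sub_distrib]
      rw [← hxX'rep]
      have : ∑ u ∈ X', (if u = v then δs else 0) • u = δs • v := by
        rw [Finset.sum_eq_single v]
        · simp
        · intro b _ hb; simp [hb]
        · intro h; exact absurd hvin h
      rw [this, ← hdsum]
    have hkey := coeff_unique hX'li hrep v hvin
    simp [hvY] at hkey
    have := hd v hvin
    linarith
  -- the unique new vertex w of X'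
  have hsd : (X' \ Y).card = 1 := by
    rw [Finset.card_sdiff_of_subset hYX', hX'card, hYcard]
    omega
  obtain ⟨w, hw⟩ := Finset.card_eq_one.1 hsd
  have hwmem : w ∈ X' \ Y := by rw [hw]; exact Finset.mem_singleton_self w
  have hwX' : w ∈ X' := (Finset.mem_sdiff.1 hwmem).1
  have hwY : w ∉ Y := (Finset.mem_sdiff.1 hwmem).2
  have hX'eq : X' = insert w Y := by
    have h1 := Finset.union_sdiff_of_subset hYX'
    rw [hw] at h1
    rw [← h1, Finset.insert_eq, Finset.union_comm]
  have hwv : w ≠ v := fun h => hvX' (h ▸ hwX')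
  -- orthogonal projections onto the span of Y
  set P : Submodule ℝ V := Submodule.span ℝ (Y : Set V) with hPdef
  have hYP : coneOf Y ⊆ (P : Set V) := coneOf_subset_span Y
  have hxP : x ∈ P := hYP hxconeY
  have hvP : v ∉ P := by
    intro hvmem
    rw [hPdef, Submodule.mem_span_finset] at hvmem
    obtain ⟨a, -, hasum⟩ := hvmem
    have hrep : ∑ u ∈ X, (if u ∈ Y then a u else 0) • u
        = ∑ u ∈ X, (if u = v then (1:ℝ) else 0) • u := by
      rw [sum_extend hYX a, hasum]
      rw [Finset.sum_eq_single v]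
      · simp
      · intro b _ hb; simp [hb]
      · intro h; exact absurd hv h
    have hkey := coeff_unique hXli hrep v hv
    simp [hvY] at hkey
  set p : V := (P.orthogonalProjectionOnto v : V) with hpdef
  set q : V := v - p with hqdef
  have hqPerp : q ∈ Pᗮ := Submodule.sub_starProjection_mem_orthogonal v
  have hpP : p ∈ P := (P.orthogonalProjectionOnto v).2
  have hq0 : q ≠ 0 := by
    intro h
    apply hvP
    have : v = p := by rw [hqdef] at h; linear_combination (norm := module) h
    rw [this]; exact hpP
  set pw : V := (P.orthogonalProjectionOnto w : V) with hpwdef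
  set qw : V := w - pw with hqwdef
  have hqwPerp : qw ∈ Pᗮ := Submodule.sub_starProjection_mem_orthogonal w
  have hpwP : pw ∈ P := (P.orthogonalProjectionOnto w).2
  -- decompose the representation of x - δs v over X'
  have hsum' : x - δs • v = d w • w + ∑ u ∈ Y, d u • u := by
    rw [hdsum, hX'eq, Finset.sum_insert hwY]
  have hdw : 0 < d w := by
    rcases lt_or_eq_of_le (hd w hwX') with h | h
    · exact h
    · exfalso
      apply hvP
      have : δs • v = x - ∑ u ∈ Y, d u • u := by
        rw [← h, zero_smul, zero_add] at hsum'
        linear_combination (norm := module) -hsum'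
      have hmem : δs • v ∈ P := by
        rw [this]
        exact Submodule.sub_mem _ hxP
          (Submodule.sum_mem _ fun u hu => Submodule.smul_mem _ _
            (Submodule.subset_span hu))
      have := P.smul_mem δs⁻¹ hmem
      rwa [smul_smul, inv_mul_cancel₀ (ne_of_gt hδs), one_smul] at this
  -- the key orthogonal relation
  have hcomboP : δs • v + d w • w ∈ P := by
    have : δs • v + d w • w = x - ∑ u ∈ Y, d u • u := by
      linear_combination (norm := module) -hsum'
    rw [this]
    exact Submodule.sub_mem _ hxP
      (Submodule.sum_mem _ fun u hu => Submodule.smul_mem _ _ (Submodule.subset_span hu))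
  have hcombo0 : δs • q + d w • qw = 0 := by
    have hmem1 : δs • q + d w • qw ∈ Pᗮ :=
      Submodule.add_mem _ (Submodule.smul_mem _ _ hqPerp) (Submodule.smul_mem _ _ hqwPerp)
    have hmem2 : δs • q + d w • qw ∈ P := by
      have heq : δs • q + d w • qw = (δs • v + d w • w) - (δs • p + d w • pw) := by
        rw [hqdef, hqwdef]; module
      rw [heq]
      exact Submodule.sub_mem _ hcomboP
        (Submodule.add_mem _ (Submodule.smul_mem _ _ hpP) (Submodule.smul_mem _ _ hpwP))
    have := (Submodule.orthogonal_disjoint P).le_bot (Submodule.mem_inf.2 ⟨hmem2, hmem1⟩)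
    simpa using this
  have hqw_eq : qw = (-(δs / d w)) • q := by
    have h1 : d w • qw = -(δs • q) := by linear_combination (norm := module) hcombo0
    have h2 : qw = (d w)⁻¹ • (d w • qw) := by
      rw [smul_smul, inv_mul_cancel₀ (ne_of_gt hdw), one_smul]
    rw [h2, h1, smul_neg, smul_smul]
    rw [neg_smul, div_eq_inv_mul]
  have hqw0 : qw ≠ 0 := by
    rw [hqw_eq]
    simp only [ne_eq, neg_smul, neg_eq_zero, smul_eq_zero, not_or]
    constructor
    · exact ne_of_gt (div_pos hδs hdw)
    · exact hq0
  -- coefficients of p and pw over Y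
  obtain ⟨a, -, hasum⟩ := Submodule.mem_span_finset.1 (hPdef ▸ hpP)
  obtain ⟨aw, -, hawsum⟩ := Submodule.mem_span_finset.1 (hPdef ▸ hpwP)
  obtain ⟨δ₁, hδ₁, -, hδ₁b⟩ := exists_delta Y c a hc (one_pos)
  obtain ⟨δ₂, hδ₂, -, hδ₂b⟩ := exists_delta Y c aw hc (one_pos)
  -- the three points
  set z : V := x + δ₁ • p with hzdef
  set f₁ : V := x + δ₁ • v with hf₁def
  set f₂ : V := z + δ₂ • qw with hf₂def
  have hzcone : z ∈ coneOf Y := by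
    refine ⟨fun u => c u + δ₁ * a u, fun y hy => ?_, ?_⟩
    · dsimp only
      have h1 := hδ₁b y hy
      have h2 := hc y hy
      have h3 := neg_abs_le (δ₁ * a y)
      linarith
    · simp only [add_smul, Finset.sum_add_distrib]
      rw [sum_smul_smul, hasum, ← hx, hzdef]
  have hzP : z ∈ P := hYP hzcone
  have hf₁cone : f₁ ∈ coneOf X := by
    refine ⟨fun u => cX u + if u = v then δ₁ else 0, fun u hu => by
      have := hcXnn u hu
      dsimp only; split_ifs <;> linarith, ?_⟩
    rw [sum_add_single cX hv, ← hxX, hf₁def]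
  have hf₁z : f₁ - z = δ₁ • q := by
    rw [hf₁def, hzdef, hqdef]; module
  have hf₂z : f₂ - z = δ₂ • qw := by
    rw [hf₂def]; abel
  have hf₂cone : f₂ ∈ coneOf X' := by
    have hval : f₂ = δ₂ • w + ∑ u ∈ Y, (c u + δ₁ * a u - δ₂ * aw u) • u := by
      have hexp : ∑ u ∈ Y, (c u + δ₁ * a u - δ₂ * aw u) • u
          = (∑ u ∈ Y, c u • u) + δ₁ • p - δ₂ • pw := by
        simp only [add_smul, sub_smul, Finset.sum_add_distrib, Finset.sum_sub_distrib]
        rw [sum_smul_smul a δ₁, sum_smul_smul aw δ₂, hasum, hawsum]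
      rw [hexp, ← hx, hf₂def, hzdef, hqwdef]
      module
    rw [hval, hX'eq]
    refine mem_coneOf_insert hwY hδ₂.le ?_
    intro u hu
    have h1 := hδ₁b u hu
    have h2 := hδ₂b u hu
    have h3 := hc u hu
    have h4 := neg_abs_le (δ₁ * a u)
    have h5 := abs_le.1 h2
    linarith
  -- neither f₁ nor f₂ lies in the cone over Y
  have hf₁Y : f₁ ∉ coneOf Y := by
    intro hmem
    apply hq0
    have h1 : δ₁ • q ∈ P := by
      rw [← hf₁z]; exact Submodule.sub_mem _ (hYP hmem) hzP
    have h2 : δ₁ • q ∈ Pᗮ := Submodule.smul_mem _ _ hqPerp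
    have := (Submodule.orthogonal_disjoint P).le_bot (Submodule.mem_inf.2 ⟨h1, h2⟩)
    simp only [Submodule.mem_bot, smul_eq_zero] at this
    rcases this with h | h
    · exact absurd h (ne_of_gt hδ₁)
    · exact h
  have hf₂Y : f₂ ∉ coneOf Y := by
    intro hmem
    apply hqw0
    have h1 : δ₂ • qw ∈ P := by
      rw [← hf₂z]; exact Submodule.sub_mem _ (hYP hmem) hzP
    have h2 : δ₂ • qw ∈ Pᗮ := Submodule.smul_mem _ _ hqwPerp
    have := (Submodule.orthogonal_disjoint P).le_bot (Submodule.mem_inf.2 ⟨h1, h2⟩)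
    simp only [Submodule.mem_bot, smul_eq_zero] at this
    rcases this with h | h
    · exact absurd h (ne_of_gt hδ₂)
    · exact h
  -- distances are realized at z
  have hinf₁ : Metric.infDist f₁ (coneOf Y) = dist f₁ z := by
    apply infDist_eq_of_orth hYP hzcone
    rw [hf₁z]; exact Submodule.smul_mem _ _ hqPerp
  have hinf₂ : Metric.infDist f₂ (coneOf Y) = dist f₂ z := by
    apply infDist_eq_of_orth hYP hzcone
    rw [hf₂z]; exact Submodule.smul_mem _ _ hqwPerp
  -- the angle at z is π
  have hangle : EuclideanGeometry.angle f₁ z f₂ = Real.pi := by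
    rw [EuclideanGeometry.angle]
    have h1 : f₁ -ᵥ z = δ₁ • q := by rw [vsub_eq_sub, hf₁z]
    have h2 : f₂ -ᵥ z = (-(δ₂ * (δs / d w))) • q := by
      rw [vsub_eq_sub, hf₂z, hqw_eq, smul_smul]
      ring_nf
    rw [h1, h2]
    exact angle_eq_pi_smul hq0 hδ₁ (by
      have : 0 < δ₂ * (δs / d w) := mul_pos hδ₂ (div_pos hδs hdw)
      linarith)
  -- X ∩ X' = Y
  have hXX'Y : X ∩ X' = Y := by
    ext u
    simp only [Finset.mem_inter]
    constructor
    · rintro ⟨huX, huX'⟩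
      rw [← hins, Finset.mem_insert] at huX
      rcases huX with rfl | h
      · exact absurd huX' hvX'
      · exact h
    · intro hu
      exact ⟨hYX hu, hYX' hu⟩
  -- π belongs to the angle set of (X, X')
  have hpi : Real.pi ∈ angleSet X X' := by
    refine ⟨z, by rw [hXX'Y]; exact hzcone,
      f₁, ⟨hf₁cone, by rw [hXX'Y]; exact hf₁Y⟩,
      f₂, ⟨hf₂cone, by rw [hXX'Y]; exact hf₂Y⟩, ?_, ?_, hangle.symm⟩
    · rw [hXX'Y]; exact hinf₁
    · rw [hXX'Y]; exact hinf₂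
  -- contradiction with the non-flat condition
  have hnf := hT Y X X' ⟨X, hX, hYX⟩ ⟨X, hX, subset_rfl⟩ ⟨X', hX', subset_rfl⟩
    (by omega) hXX'Y.symm (by omega) (by omega)
  rw [sSup_angleSet_eq_pi hpi] at hnf
  exact lt_irrefl _ hnf

end Tools5

end DDTGen
namespace DDTGen

section Tools6

variable {V : Type*} [NormedAddCommGroup V] [InnerProductSpace ℝ V]

lemma IsSimpleBase.subset {m k : ℕ} {X A : Finset V} (hX : IsSimpleBase m X)
    (hAX : A ⊆ X) (hcard : A.card = k) : IsSimpleBase k A := by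
  obtain ⟨-, hnorm, haff⟩ := hX
  refine ⟨hcard, fun v hv => hnorm v (hAX hv), ?_⟩
  have hsub : (insert (0:V) (A : Set V)) ⊆ (insert (0:V) (X : Set V)) :=
    Set.insert_subset_insert (Finset.coe_subset.2 hAX)
  let e : (insert (0:V) (A : Set V) : Set V) ↪ (insert (0:V) (X : Set V) : Set V) :=
    ⟨fun z => ⟨z.1, hsub z.2⟩, fun a b hab => by apply Subtype.ext; simpa [Subtype.ext_iff] using hab⟩
  have := haff.comp_embedding e
  convert this using 1
  rfl

/-- separation from the other faces at a relative interior point. -/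
lemma exists_sep {m : ℕ} [FiniteDimensional ℝ V] (T : ComplexCone V m)
    {X : Finset V} (hX : X ∈ T.faces) {x : V}
    (hrel : x ∈ relInterior (coneOf X)) :
    ∃ r1 > 0, ∀ F ∈ T.faces, F ≠ X → Metric.ball x r1 ∩ coneOf F = ∅ := by
  classical
  have hnotmem : ∀ F ∈ T.faces, F ≠ X → x ∉ coneOf F := by
    intro F hF hne hxF
    have hinter : x ∈ coneOf (X ∩ F) := by
      rw [← T.inter_eq X F ⟨X, hX, subset_rfl⟩ ⟨F, hF, subset_rfl⟩]
      exact ⟨hrel.1, hxF⟩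
    have hXF : X ∩ F ≠ X := by
      intro h
      have hXsub : X ⊆ F := Finset.inter_eq_left.1 h
      have : X = F := Finset.eq_of_subset_of_card_le hXsub
        (by rw [(T.simple F hF).1, (T.simple X hX).1])
      exact hne this.symm
    exact relInterior_coneOf_disjoint (T.simple X hX).linIndep
      Finset.inter_subset_left hXF hrel hinter
  have hpos : ∀ F ∈ T.faces, F ≠ X → 0 < Metric.infDist x (coneOf F) := by
    intro F hF hne
    have hcl : IsClosed (coneOf F) := isClosed_coneOf (T.simple F hF).linIndep
    exact (hcl.notMem_iff_infDist_pos ⟨0, zero_mem_coneOf F⟩).1 (hnotmem F hF hne)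
  by_cases hs : (T.faces.erase X).Nonempty
  · refine ⟨(T.faces.erase X).inf' hs (fun F => Metric.infDist x (coneOf F)), ?_, ?_⟩
    · rw [gt_iff_lt, Finset.lt_inf'_iff]
      intro F hF
      exact hpos F (Finset.mem_of_mem_erase hF) (Finset.ne_of_mem_erase hF)
    · intro F hF hne
      ext y
      simp only [Set.mem_inter_iff, Set.mem_empty_iff_false, iff_false, not_and]
      intro hball hyF
      have h1 : Metric.infDist x (coneOf F) ≤ dist x y := Metric.infDist_le_dist_of_mem hyF
      have h2 : (T.faces.erase X).inf' hs (fun F => Metric.infDist x (coneOf F))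
          ≤ Metric.infDist x (coneOf F) :=
        Finset.inf'_le _ (Finset.mem_erase.2 ⟨hne, hF⟩)
      rw [Metric.mem_ball, dist_comm] at hball
      linarith
  · refine ⟨1, one_pos, fun F hF hne => ?_⟩
    exact absurd ⟨F, Finset.mem_erase.2 ⟨hne, hF⟩⟩ hs

/-- Part A, ⊇ : relative interior points of faces are in `RI`. -/
lemma relInt_subset_RI {m : ℕ} [FiniteDimensional ℝ V] (T : ComplexCone V m)
    {X : Finset V} (hX : X ∈ T.faces) {x : V}
    (hrel : x ∈ relInterior (coneOf X)) : x ∈ RI m T.carrier := by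
  classical
  obtain ⟨hxcone, r₀, hr₀, hball⟩ := hrel
  obtain ⟨r1, hr1, hsep⟩ := exists_sep T hX ⟨hxcone, r₀, hr₀, hball⟩
  have hXli := (T.simple X hX).linIndep
  refine ⟨Set.mem_biUnion hX hxcone, min r₀ r1, lt_min hr₀ hr1,
    (Submodule.span ℝ (X : Set V)).toAffineSubspace, ⟨0, by
      rw [SetLike.mem_coe, Submodule.mem_toAffineSubspace]; exact Submodule.zero_mem _⟩,
    ?_, ?_⟩
  · rw [Submodule.toAffineSubspace_direction]
    rw [finrank_span_finset_eq_card hXli]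
    exact (T.simple X hX).1
  · apply Set.Subset.antisymm
    · rintro y ⟨hyT, hyball⟩
      obtain ⟨F, hF, hyF⟩ := Set.mem_iUnion₂.1 hyT
      by_cases hFX : F = X
      · subst hFX
        refine ⟨?_, hyball⟩
        rw [SetLike.mem_coe, Submodule.mem_toAffineSubspace]
        exact coneOf_subset_span F hyF
      · exfalso
        have : y ∈ Metric.ball x r1 ∩ coneOf F :=
          ⟨Metric.ball_subset_ball (min_le_right r₀ r1) hyball, hyF⟩
        rw [hsep F hF hFX] at this
        exact this
    · rintro y ⟨hyQ, hyball⟩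
      have hyspan : y ∈ (affineSpan ℝ (coneOf X) : Set V) := by
        rw [affineSpan_coneOf]
        rw [SetLike.mem_coe, Submodule.mem_toAffineSubspace] at hyQ
        exact hyQ
      have hycone : y ∈ coneOf X :=
        hball ⟨hyspan, Metric.ball_subset_ball (min_le_left r₀ r1) hyball⟩
      exact ⟨Set.mem_biUnion hX hycone, hyball⟩

end Tools6

end DDTGen
namespace DDTGen

section Tools7

variable {V : Type*} [NormedAddCommGroup V] [InnerProductSpace ℝ V]

lemma RI_subset_relInt [FiniteDimensional ℝ V] [CompleteSpace V] {m : ℕ}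
    (T : ComplexCone V m) (hT : T.NonFlat) (hm : 1 ≤ m) {x : V}
    (hx : x ∈ RI m T.carrier) :
    x ∈ ⋃ X ∈ T.faces, relInterior (coneOf X) := by
  classical
  obtain ⟨hxT, r, hr, Q, hQne, hQrank, hloc⟩ := hx
  obtain ⟨X, hX, hxcone⟩ := Set.mem_iUnion₂.1 hxT
  obtain ⟨c, hcnn, hcsum⟩ := hxcone
  by_cases hpos : ∀ u ∈ X, 0 < c u
  · refine Set.mem_biUnion hX ?_
    rw [hcsum]
    exact mem_relInterior_of_pos (T.simple X hX).linIndep hpos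
  · exfalso
    push_neg at hpos
    obtain ⟨v₀, hv₀, hnpos⟩ := hpos
    have hc0 : c v₀ = 0 := le_antisymm hnpos (hcnn v₀ hv₀)
    set S : V := ∑ u ∈ X.erase v₀, u with hSdef
    set δ : ℝ := r / (2 * (‖S‖ + 1)) with hδdef
    have hδ : 0 < δ := by positivity
    set x' : V := ∑ u ∈ X.erase v₀, (c u + δ) • u with hx'def
    have hxrep : x = ∑ u ∈ X.erase v₀, c u • u := by
      rw [hcsum, Finset.sum_erase]
      rw [hc0, zero_smul]
    have hdiff : x' - x = δ • S := by
      rw [hx'def, hxrep, hSdef, Finset.smul_sum]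
      simp only [add_smul, Finset.sum_add_distrib]
      abel
    have hdist : dist x' x < r / 2 := by
      rw [dist_eq_norm, hdiff, norm_smul, Real.norm_eq_abs, abs_of_pos hδ, hδdef]
      rw [div_mul_eq_mul_div, div_lt_iff₀ (by positivity)]
      nlinarith [norm_nonneg S]
    have hr' : 0 < r - dist x' x := by
      have : dist x' x < r := lt_trans hdist (by linarith)
      linarith
    have hsub : Metric.ball x' (r - dist x' x) ⊆ Metric.ball x r := by
      intro y hy
      rw [Metric.mem_ball] at hy ⊢
      have := dist_triangle y x' x
      linarith
    have hloc' : T.carrier ∩ Metric.ball x' (r - dist x' x)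
        = (Q : Set V) ∩ Metric.ball x' (r - dist x' x) := by
      ext y
      constructor
      · rintro ⟨h1, h2⟩
        exact ⟨(hloc.subset ⟨h1, hsub h2⟩).1, h2⟩
      · rintro ⟨h1, h2⟩
        exact ⟨(hloc.symm.subset ⟨h1, hsub h2⟩).1, h2⟩
    exact main_contradiction T hT hm hX hv₀
      (fun y hy => by
        have h := hcnn y (Finset.mem_of_mem_erase hy)
        linarith) hx'def hr' hloc'

end Tools7

end DDTGen
namespace DDTGen

/-- **Lemma 2.8**: for a non-flat complex cone `T` of dimension `m ∈ {1,…,n}`,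
the relative interior `RI_m(T)` is the union of the relative interiors of the
faces, and `T \ RI_m(T)` is a non-flat complex cone of dimension `m−1`, equal
to the union of the cones over the `(m−1)`-element members of `Ω_T`. -/
theorem statement1
    (n N' : ℕ) (hn : 0 < n) (hnN' : n < N')
    (m : ℕ) (hm1 : 1 ≤ m) (hmn : m ≤ n)
    (T : ComplexCone (EuclideanSpace ℝ (Fin N')) m) (hT : T.NonFlat) :
    RI m T.carrier = (⋃ X ∈ T.faces, relInterior (coneOf X)) ∧
    T.carrier \ RI m T.carrier =
      (⋃ Y ∈ {Y : Finset (EuclideanSpace ℝ (Fin N')) | T.inOmega Y ∧ Y.card = m - 1},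
        coneOf Y) ∧
    ∃ T' : ComplexCone (EuclideanSpace ℝ (Fin N')) (m - 1), T'.NonFlat ∧
      T'.carrier = T.carrier \ RI m T.carrier := by
  classical
  set V := EuclideanSpace ℝ (Fin N')
  -- Part A
  have hA : RI m T.carrier = ⋃ X ∈ T.faces, relInterior (coneOf X) := by
    apply Set.Subset.antisymm
    · intro x hx
      exact RI_subset_relInt T hT hm1 hx
    · intro x hx
      obtain ⟨X, hX, hrel⟩ := Set.mem_iUnion₂.1 hx
      exact relInt_subset_RI T hX hrel
  -- Part B
  have hB : T.carrier \ RI m T.carrier =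
      (⋃ Y ∈ {Y : Finset V | T.inOmega Y ∧ Y.card = m - 1}, coneOf Y) := by
    rw [hA]
    ext y
    constructor
    · rintro ⟨hyT, hynot⟩
      obtain ⟨X, hX, hycone⟩ := Set.mem_iUnion₂.1 hyT
      obtain ⟨c, hcnn, hcsum⟩ := hycone
      by_cases hpos : ∀ u ∈ X, 0 < c u
      · exact absurd (Set.mem_biUnion hX
          (hcsum ▸ mem_relInterior_of_pos (T.simple X hX).linIndep hpos)) hynot
      · push_neg at hpos
        obtain ⟨v₀, hv₀, hnpos⟩ := hpos
        have hc0 : c v₀ = 0 := le_antisymm hnpos (hcnn v₀ hv₀)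
        have hmem : y ∈ coneOf (X.erase v₀) := by
          rw [hcsum]
          convert mem_coneOf_erase hv₀ hcnn hc0 using 3
        refine Set.mem_iUnion₂.2 ⟨X.erase v₀, ?_, hmem⟩
        refine ⟨⟨X, hX, Finset.erase_subset v₀ X⟩, ?_⟩
        rw [Finset.card_erase_of_mem hv₀, (T.simple X hX).1]
    · intro hy
      obtain ⟨Y, hYmem, hycone⟩ := Set.mem_iUnion₂.1 hy
      obtain ⟨⟨X₀, hX₀, hYsub⟩, hYcard⟩ := hYmem
      refine ⟨Set.mem_biUnion hX₀ (coneOf_mono hYsub hycone), ?_⟩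
      intro hymem
      obtain ⟨F, hF, hyrel⟩ := Set.mem_iUnion₂.1 hymem
      have hyinter : y ∈ coneOf (Y ∩ F) := by
        convert (T.inter_eq Y F ⟨X₀, hX₀, hYsub⟩ ⟨F, hF, subset_rfl⟩).subset ⟨hycone, hyrel.1⟩ using 4
      have hne : Y ∩ F ≠ F := by
        intro h
        have h1 : (Y ∩ F).card ≤ Y.card := Finset.card_le_card Finset.inter_subset_left
        rw [h, (T.simple F hF).1] at h1
        rw [hYcard] at h1
        omega
      exact relInterior_coneOf_disjoint (T.simple F hF).linIndep
        Finset.inter_subset_right hne hyrel hyinter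
  refine ⟨hA, hB, ?_⟩
  -- Part C: the complex cone structure on the skeleton
  have hfaces_ne : (T.faces.biUnion (fun X => X.powersetCard (m-1))).Nonempty := by
    obtain ⟨X, hX⟩ := T.faces_nonempty
    obtain ⟨A, hAX, hAcard⟩ := Finset.exists_subset_card_eq (s := X) (n := m-1)
      (by rw [(T.simple X hX).1]; omega)
    exact ⟨A, Finset.mem_biUnion.2 ⟨X, hX, Finset.mem_powersetCard.2 ⟨hAX, hAcard⟩⟩⟩
  set T' : ComplexCone V (m-1) :=
    { faces := T.faces.biUnion (fun X => X.powersetCard (m-1))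
      faces_nonempty := hfaces_ne
      simple := by
        intro A hA
        obtain ⟨X, hX, hA'⟩ := Finset.mem_biUnion.1 hA
        obtain ⟨hAX, hAcard⟩ := Finset.mem_powersetCard.1 hA'
        exact (T.simple X hX).subset hAX hAcard
      inter_eq := by
        intro A B hA hB
        apply T.inter_eq A B
        · obtain ⟨A', hA', hAA'⟩ := hA
          obtain ⟨X, hX, hpow⟩ := Finset.mem_biUnion.1 hA'
          exact ⟨X, hX, hAA'.trans (Finset.mem_powersetCard.1 hpow).1⟩
        · obtain ⟨B', hB', hBB'⟩ := hB
          obtain ⟨X, hX, hpow⟩ := Finset.mem_biUnion.1 hB'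
          exact ⟨X, hX, hBB'.trans (Finset.mem_powersetCard.1 hpow).1⟩ } with hT'def
  have hlift : ∀ W : Finset V, T'.inOmega W → T.inOmega W := by
    intro W ⟨A, hA, hWA⟩
    obtain ⟨X, hX, hpow⟩ := Finset.mem_biUnion.1 hA
    exact ⟨X, hX, hWA.trans (Finset.mem_powersetCard.1 hpow).1⟩
  refine ⟨T', ?_, ?_⟩
  · intro Y Z₁ Z₂ hY hZ₁ hZ₂ hcard heq h1 h2
    exact hT Y Z₁ Z₂ (hlift Y hY) (hlift Z₁ hZ₁) (hlift Z₂ hZ₂) (by omega) heq h1 h2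
  · rw [hB]
    ext y
    rw [ComplexCone.carrier]
    constructor
    · intro hy
      obtain ⟨A, hA, hycone⟩ := Set.mem_iUnion₂.1 hy
      obtain ⟨X, hX, hpow⟩ := Finset.mem_biUnion.1 hA
      obtain ⟨hAX, hAcard⟩ := Finset.mem_powersetCard.1 hpow
      exact Set.mem_iUnion₂.2 ⟨A, ⟨⟨X, hX, hAX⟩, hAcard⟩, hycone⟩
    · intro hy
      obtain ⟨Y, ⟨⟨X, hX, hYX⟩, hYcard⟩, hycone⟩ := Set.mem_iUnion₂.1 hy
      exact Set.mem_iUnion₂.2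
        ⟨Y, Finset.mem_biUnion.2 ⟨X, hX, Finset.mem_powersetCard.2 ⟨hYX, hYcard⟩⟩, hycone⟩

end DDTGen
end
end

section
/- For each 0≤m≤n and each set W of type m, the class of blow-up limits is complete under iteration: 𝒜(𝒜(W))=𝒜(W), where 𝒜(𝒜(W))=∪_{X∈𝒜(W)}𝒜(X). -/
open Metric Set
open scoped Classical

noncomputable section

namespace DDTGen


-- ======================================================================
-- Auxiliary development for the proof of Proposition 2.12
-- ======================================================================

section Aux
variable {V : Type*} [NormedAddCommGroup V] [InnerProductSpace ℝ V]

/-- A (pointed) cone. -/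
def IsCone (A : Set V) : Prop := 0 ∈ A ∧ ∀ c : ℝ, 0 ≤ c → ∀ a ∈ A, c • a ∈ A

/-- `K` coincides with the translate of the cone `T` on the ball `B(p,r)`. -/
def ConeAt (K : Set V) (p : V) (r : ℝ) (T : Set V) : Prop :=
  0 < r ∧ IsCone T ∧ K ∩ Metric.ball p r = (fun t => p + t) '' (T ∩ Metric.ball 0 r)

lemma add_mem_ball_iff {p t : V} {r : ℝ} : p + t ∈ Metric.ball p r ↔ ‖t‖ < r := by
  simp [Metric.mem_ball, dist_eq_norm]

lemma ConeAt.mono {K T : Set V} {p : V} {r r' : ℝ} (h : ConeAt K p r T)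
    (h0 : 0 < r') (hle : r' ≤ r) : ConeAt K p r' T := by
  obtain ⟨hr, hTc, hEq⟩ := h
  refine ⟨h0, hTc, ?_⟩
  ext z
  constructor
  · rintro ⟨hzK, hzb⟩
    have hz : z ∈ K ∩ Metric.ball p r := ⟨hzK, Metric.ball_subset_ball hle hzb⟩
    rw [hEq] at hz
    obtain ⟨t, ⟨htT, _⟩, rfl⟩ := hz
    exact ⟨t, ⟨htT, mem_ball_zero_iff.2 (add_mem_ball_iff.1 hzb)⟩, rfl⟩
  · rintro ⟨t, ⟨htT, htb⟩, rfl⟩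
    have hz : p + t ∈ K ∩ Metric.ball p r := by
      rw [hEq]
      exact ⟨t, ⟨htT, Metric.ball_subset_ball hle htb⟩, rfl⟩
    exact ⟨hz.1, add_mem_ball_iff.2 (mem_ball_zero_iff.1 htb)⟩

lemma blowUp_eq_of_coneAt {K T : Set V} {p : V} {r r' : ℝ} (h : ConeAt K p r T)
    (h0 : 0 < r') (hle : r' ≤ r) : blowUp K p r' = T := by
  obtain ⟨-, ⟨hT0, hTc⟩, hEq⟩ := h.mono h0 hle
  ext y
  constructor
  · rintro ⟨c, hc, z, hz, rfl⟩
    rw [hEq] at hz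
    obtain ⟨t, ⟨htT, -⟩, rfl⟩ := hz
    simpa [add_sub_cancel_left] using hTc c hc t htT
  · intro hy
    by_cases h0y : y = 0
    · refine ⟨0, le_refl 0, p, ?_, by simp [h0y]⟩
      rw [hEq]
      exact ⟨0, ⟨hT0, by simpa using h0⟩, by simp⟩
    · have hny : 0 < ‖y‖ := norm_pos_iff.2 h0y
      set c : ℝ := r' / (2 * ‖y‖) with hcdef
      have hcpos : 0 < c := by positivity
      have hcy : c * ‖y‖ = r' / 2 := by
        rw [hcdef]; field_simp
      refine ⟨c⁻¹, by positivity, p + c • y, ?_, ?_⟩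
      · have hmem : p + c • y ∈ K ∩ Metric.ball p r' := by
          rw [hEq]
          refine ⟨c • y, ⟨hTc c hcpos.le y hy, ?_⟩, rfl⟩
          rw [mem_ball_zero_iff, norm_smul, Real.norm_eq_abs, abs_of_pos hcpos, hcy]
          linarith
        exact hmem
      · rw [add_sub_cancel_left, smul_smul, inv_mul_cancel₀ (ne_of_gt hcpos), one_smul]


lemma isCone_blowUp {W : Set V} {x : V} {r : ℝ} (hx : x ∈ W) (hr : 0 < r) :
    IsCone (blowUp W x r) := by
  constructor
  · exact ⟨0, le_refl 0, x, ⟨hx, Metric.mem_ball_self hr⟩, by simp⟩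
  · rintro c hc a ⟨c', hc', z, hz, rfl⟩
    exact ⟨c * c', mul_nonneg hc hc', z, hz, by rw [smul_smul]⟩

lemma blowUp_zero_of_cone {A : Set V} (hA : IsCone A) {r : ℝ} (hr : 0 < r) :
    blowUp A 0 r = A := by
  obtain ⟨h0, hc⟩ := hA
  ext y
  constructor
  · rintro ⟨c, hcn, z, ⟨hzA, -⟩, rfl⟩
    simpa using hc c hcn z hzA
  · intro hy
    by_cases h0y : y = 0
    · exact ⟨0, le_refl 0, 0, ⟨h0, Metric.mem_ball_self hr⟩, by simp [h0y]⟩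
    · have hny : 0 < ‖y‖ := norm_pos_iff.2 h0y
      set c : ℝ := r / (2 * ‖y‖) with hcdef
      have hcpos : 0 < c := by positivity
      have hcy : c * ‖y‖ = r / 2 := by rw [hcdef]; field_simp
      refine ⟨c⁻¹, by positivity, c • y, ⟨hc c hcpos.le y hy, ?_⟩, ?_⟩
      · rw [mem_ball_zero_iff, norm_smul, Real.norm_eq_abs, abs_of_pos hcpos, hcy]
        linarith
      · rw [sub_zero, smul_smul, inv_mul_cancel₀ (ne_of_gt hcpos), one_smul]

/-- the crucial shifting lemma: a tangent cone of a tangent cone is a tangent cone. -/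
lemma coneAt_shift {K T T' : Set V} {p q : V} {r s : ℝ}
    (hK : ConeAt K p r T) (hq : q ∈ T) (hT : ConeAt T q s T') :
    ∃ x' s', x' ∈ K ∧ 0 < s' ∧ ConeAt K x' s' T' := by
  obtain ⟨hr, ⟨hT0, hTc⟩, hKeq⟩ := hK
  obtain ⟨hs, hT'cone, hTeq⟩ := hT
  set ε : ℝ := r / (2 * (s + ‖q‖ + 1)) with hε
  have hεpos : 0 < ε := by positivity
  have hkey : ε * (s + ‖q‖) < r := by
    have h2 : (0:ℝ) < 2 * (s + ‖q‖ + 1) := by positivity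
    rw [hε, div_mul_eq_mul_div, div_lt_iff₀ h2]
    nlinarith [norm_nonneg q]
  have hεq : ε • q ∈ T := hTc ε hεpos.le q hq
  have hεqn : ‖ε • q‖ < r := by
    rw [norm_smul, Real.norm_eq_abs, abs_of_pos hεpos]
    nlinarith [norm_nonneg q]
  have hx'K : p + ε • q ∈ K := by
    have hmem : p + ε • q ∈ K ∩ Metric.ball p r := by
      rw [hKeq]
      exact ⟨ε • q, ⟨hεq, mem_ball_zero_iff.2 hεqn⟩, rfl⟩
    exact hmem.1
  refine ⟨p + ε • q, ε * s, hx'K, by positivity, by positivity, hT'cone, ?_⟩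
  ext z
  constructor
  · rintro ⟨hzK, hzb⟩
    have hzb' : dist z (p + ε • q) < ε * s := hzb
    have hzr : z ∈ K ∩ Metric.ball p r := by
      refine ⟨hzK, ?_⟩
      have h3 : dist z p ≤ dist z (p + ε • q) + dist (p + ε • q) p := dist_triangle _ _ _
      have h4 : dist (p + ε • q) p = ‖ε • q‖ := by
        rw [dist_eq_norm, add_sub_cancel_left]
      have h5 : ‖ε • q‖ = ε * ‖q‖ := by
        rw [norm_smul, Real.norm_eq_abs, abs_of_pos hεpos]
      rw [Metric.mem_ball]
      rw [h4, h5] at h3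
      nlinarith
    rw [hKeq] at hzr
    obtain ⟨t, ⟨htT, htb⟩, rfl⟩ := hzr
    have h1 : ‖t - ε • q‖ < ε * s := by
      have h6 : dist (p + t) (p + ε • q) < ε * s := hzb'
      rw [dist_eq_norm, add_sub_add_left_eq_sub] at h6
      exact h6
    set t₀ := ε⁻¹ • t with ht₀
    have ht₀T : t₀ ∈ T := hTc ε⁻¹ (by positivity) t htT
    have ht₀b : t₀ ∈ Metric.ball q s := by
      rw [Metric.mem_ball, dist_eq_norm]
      have he : t₀ - q = ε⁻¹ • (t - ε • q) := by
        rw [smul_sub, smul_smul, inv_mul_cancel₀ (ne_of_gt hεpos), one_smul, ht₀]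
      rw [he, norm_smul, Real.norm_eq_abs, abs_of_pos (inv_pos.2 hεpos)]
      calc ε⁻¹ * ‖t - ε • q‖ < ε⁻¹ * (ε * s) :=
            mul_lt_mul_of_pos_left h1 (inv_pos.2 hεpos)
        _ = s := by field_simp
    have hmem : t₀ ∈ T ∩ Metric.ball q s := ⟨ht₀T, ht₀b⟩
    rw [hTeq] at hmem
    obtain ⟨t', ⟨ht'T, ht'b⟩, ht'e⟩ := hmem
    have ht'e' : q + t' = t₀ := ht'e
    refine ⟨ε • t', ⟨hT'cone.2 ε hεpos.le t' ht'T, ?_⟩, ?_⟩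
    · rw [mem_ball_zero_iff, norm_smul, Real.norm_eq_abs, abs_of_pos hεpos]
      exact (mul_lt_mul_of_pos_left (mem_ball_zero_iff.1 ht'b) hεpos)
    · have h7 : t = ε • t₀ := by
        rw [ht₀, smul_smul, mul_inv_cancel₀ (ne_of_gt hεpos), one_smul]
      show p + ε • q + ε • t' = p + t
      rw [h7, ← ht'e', smul_add]
      abel
  · rintro ⟨t', ⟨ht'T, ht'b⟩, rfl⟩
    have h1 : q + ε⁻¹ • t' ∈ T ∩ Metric.ball q s := by
      rw [hTeq]
      refine ⟨ε⁻¹ • t', ⟨hT'cone.2 ε⁻¹ (by positivity) t' ht'T, ?_⟩, rfl⟩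
      rw [mem_ball_zero_iff, norm_smul, Real.norm_eq_abs, abs_of_pos (inv_pos.2 hεpos)]
      calc ε⁻¹ * ‖t'‖ < ε⁻¹ * (ε * s) :=
            mul_lt_mul_of_pos_left (mem_ball_zero_iff.1 ht'b) (inv_pos.2 hεpos)
        _ = s := by field_simp
    have h2 : ε • (q + ε⁻¹ • t') ∈ T := hTc ε hεpos.le _ h1.1
    have h3 : ε • (q + ε⁻¹ • t') = ε • q + t' := by
      rw [smul_add, smul_smul, mul_inv_cancel₀ (ne_of_gt hεpos), one_smul]
    have h4 : ‖ε • q + t'‖ < r := by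
      calc ‖ε • q + t'‖ ≤ ‖ε • q‖ + ‖t'‖ := norm_add_le _ _
        _ < ε * ‖q‖ + ε * s := by
            rw [norm_smul, Real.norm_eq_abs, abs_of_pos hεpos]
            exact add_lt_add_of_le_of_lt (le_refl _) (mem_ball_zero_iff.1 ht'b)
        _ ≤ ε * (s + ‖q‖) := by ring_nf; exact le_refl _
        _ < r := hkey
    have hmem : p + (ε • q + t') ∈ K ∩ Metric.ball p r := by
      rw [hKeq]
      exact ⟨ε • q + t', ⟨h3 ▸ h2, mem_ball_zero_iff.2 h4⟩, rfl⟩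
    constructor
    · show p + ε • q + t' ∈ K
      have h5 : p + ε • q + t' = p + (ε • q + t') := by abel
      rw [h5]
      exact hmem.1
    · show p + ε • q + t' ∈ Metric.ball (p + ε • q) (ε * s)
      exact add_mem_ball_iff.2 (mem_ball_zero_iff.1 ht'b)

/-- blow-ups transform naturally under isometries. -/
lemma blowUp_image (f : V ≃ᵢ V) (S : Set V) (x : V) (r : ℝ) :
    blowUp (f '' S) (f x) r = f.toRealLinearIsometryEquiv '' blowUp S x r := by
  set e := f.toRealLinearIsometryEquiv with hedef
  have he : ∀ a : V, e a = f a - f 0 := fun a => f.toRealLinearIsometryEquiv_apply a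
  ext y
  constructor
  · rintro ⟨c, hc, z, ⟨⟨w, hwS, rfl⟩, hzb⟩, rfl⟩
    refine ⟨c • (w - x), ⟨c, hc, w, ⟨hwS, ?_⟩, rfl⟩, ?_⟩
    · rwa [Metric.mem_ball, ← f.dist_eq w x]
    · rw [map_smul, map_sub, he, he]
      abel_nf
  · rintro ⟨b, ⟨c, hc, w, ⟨hwS, hwb⟩, rfl⟩, rfl⟩
    refine ⟨c, hc, f w, ⟨Set.mem_image_of_mem f hwS, ?_⟩, ?_⟩
    · rwa [Metric.mem_ball, f.dist_eq w x]
    · rw [map_smul, map_sub, he, he]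
      abel_nf


end Aux

section Poly

/-- a generalized orthant in `ℝ^ι`. -/
def orthSet {ι : Type} (S : Set ι) : Set (EuclideanSpace ℝ ι) :=
  {v | ∀ j ∈ S, 0 ≤ v j}

lemma isCone_orthSet {ι : Type} [Fintype ι] (S : Set ι) : IsCone (orthSet S) := by
  constructor
  · intro j _
    simp [PiLp.zero_apply]
  · intro c hc v hv j hj
    rw [PiLp.smul_apply]
    exact mul_nonneg hc (hv j hj)

variable {V : Type*} [NormedAddCommGroup V] [InnerProductSpace ℝ V]

/-- a finite union of injective linear images of generalized orthants. -/
def PolyConic (K : Set V) : Prop :=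
  ∃ (κ : Type) (_ : Fintype κ) (ι : κ → Type) (_ : ∀ i, Fintype (ι i))
    (S : ∀ i, Set (ι i)) (φ : ∀ i, EuclideanSpace ℝ (ι i) →ₗ[ℝ] V),
    (∀ i, Function.Injective (φ i)) ∧ K = ⋃ i, φ i '' orthSet (S i)

lemma abs_coord_le_norm {ι : Type} [Fintype ι] (u : EuclideanSpace ℝ ι) (j : ι) :
    |u j| ≤ ‖u‖ := by
  rw [EuclideanSpace.norm_eq, ← Real.sqrt_sq_eq_abs]
  apply Real.sqrt_le_sqrt
  have h := Finset.single_le_sum (f := fun i => ‖u i‖ ^ 2)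
    (fun i _ => sq_nonneg _) (Finset.mem_univ j)
  simpa [Real.norm_eq_abs, sq_abs] using h

lemma euclid_sum_apply {α ι : Type} (s : Finset α) (f : α → EuclideanSpace ℝ ι) (j : ι) :
    (∑ a ∈ s, f a) j = ∑ a ∈ s, f a j := by
  induction s using Finset.cons_induction with
  | empty => simp [PiLp.zero_apply]
  | cons a s ha ih => rw [Finset.sum_cons, Finset.sum_cons, PiLp.add_apply, ih]

/-- local conicality of orthants. -/
lemma orthSet_coneAt {ι : Type} [Fintype ι] (S : Set ι) (w : EuclideanSpace ℝ ι)
    (hw : w ∈ orthSet S) :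
    ∃ ρ > 0, ConeAt (orthSet S) w ρ (orthSet {j | j ∈ S ∧ w j = 0}) := by
  obtain ⟨ρ, hρpos, hρ⟩ : ∃ ρ > 0, ∀ j ∈ S, w j ≠ 0 → ρ ≤ w j := by
    by_cases hne : (Finset.univ.filter (fun j => j ∈ S ∧ w j ≠ 0)).Nonempty
    · refine ⟨(Finset.univ.filter (fun j => j ∈ S ∧ w j ≠ 0)).inf' hne w, ?_, ?_⟩
      · rw [gt_iff_lt, Finset.lt_inf'_iff]
        intro j hj
        rw [Finset.mem_filter] at hj
        exact lt_of_le_of_ne (hw j hj.2.1) (Ne.symm hj.2.2)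
      · intro j hjS hj0
        exact Finset.inf'_le w (by simp [hjS, hj0])
    · refine ⟨1, one_pos, fun j hjS hj0 => absurd ?_ hne⟩
      exact ⟨j, by simp [hjS, hj0]⟩
  refine ⟨ρ, hρpos, hρpos, isCone_orthSet _, ?_⟩
  ext z
  constructor
  · rintro ⟨hzO, hzb⟩
    refine ⟨z - w, ⟨?_, ?_⟩, by simp⟩
    · rintro j ⟨hjS, hj0⟩
      rw [PiLp.sub_apply, hj0, sub_zero]
      exact hzO j hjS
    · rw [mem_ball_zero_iff]
      rw [Metric.mem_ball, dist_eq_norm] at hzb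
      exact hzb
  · rintro ⟨u, ⟨huO, hub⟩, rfl⟩
    rw [mem_ball_zero_iff] at hub
    constructor
    · intro j hjS
      show (0:ℝ) ≤ (w + u) j
      rw [PiLp.add_apply]
      by_cases hj0 : w j = 0
      · rw [hj0, zero_add]
        exact huO j ⟨hjS, hj0⟩
      · have h1 : ρ ≤ w j := hρ j hjS hj0
        have h2 : |u j| ≤ ‖u‖ := abs_coord_le_norm u j
        have h3 : -(u j) ≤ |u j| := neg_le_abs _
        linarith
    · show w + u ∈ Metric.ball w ρ
      exact add_mem_ball_iff.2 hub

/-- transfer of local conicality through an injective linear map. -/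
lemma coneAt_image {ι : Type} [Fintype ι] [FiniteDimensional ℝ V]
    (φ : EuclideanSpace ℝ ι →ₗ[ℝ] V) (hφ : Function.Injective φ)
    {Q Q' : Set (EuclideanSpace ℝ ι)} {w : EuclideanSpace ℝ ι} {ρ : ℝ}
    (h : ConeAt Q w ρ Q') :
    ∃ r > 0, ConeAt (φ '' Q) (φ w) r (φ '' Q') := by
  obtain ⟨hρ, ⟨hQ'0, hQ'c⟩, hEq⟩ := h
  -- antilipschitz constant
  obtain ⟨c, hc, hanti⟩ : ∃ c : ℝ, 0 < c ∧ ∀ v, ‖v‖ ≤ c * ‖φ v‖ := by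
    set e := LinearEquiv.ofInjective φ hφ with hedef
    haveI : FiniteDimensional ℝ (LinearMap.range φ) := inferInstance
    set ψ := LinearMap.toContinuousLinearMap (e.symm : LinearMap.range φ →ₗ[ℝ] EuclideanSpace ℝ ι) with hψdef
    refine ⟨‖ψ‖ + 1, by positivity, fun v => ?_⟩
    have h1 : ψ (e v) = v := by
      simp [hψdef, LinearMap.coe_toContinuousLinearMap']
    have h2 : ‖e v‖ = ‖φ v‖ := rfl
    calc ‖v‖ = ‖ψ (e v)‖ := by rw [h1]
      _ ≤ ‖ψ‖ * ‖e v‖ := ψ.le_opNorm _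
      _ = ‖ψ‖ * ‖φ v‖ := by rw [h2]
      _ ≤ (‖ψ‖ + 1) * ‖φ v‖ := by
          apply mul_le_mul_of_nonneg_right (by linarith) (norm_nonneg _)
  refine ⟨ρ / c, by positivity, by positivity, ?_, ?_⟩
  · constructor
    · exact ⟨0, hQ'0, map_zero φ⟩
    · rintro a ha b ⟨v, hvQ', rfl⟩
      exact ⟨a • v, hQ'c a ha v hvQ', map_smul φ a v⟩
  · ext z
    constructor
    · rintro ⟨⟨u, huQ, rfl⟩, hzb⟩
      have h1 : ‖u - w‖ < ρ := by
        have h2 : ‖φ u - φ w‖ < ρ / c := by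
          rw [Metric.mem_ball, dist_eq_norm] at hzb
          exact hzb
        have h3 : ‖u - w‖ ≤ c * ‖φ (u - w)‖ := hanti _
        rw [map_sub] at h3
        calc ‖u - w‖ ≤ c * ‖φ u - φ w‖ := h3
          _ < c * (ρ / c) := mul_lt_mul_of_pos_left h2 hc
          _ = ρ := by field_simp
      have hmem : u ∈ Q ∩ Metric.ball w ρ := ⟨huQ, by rwa [Metric.mem_ball, dist_eq_norm]⟩
      rw [hEq] at hmem
      obtain ⟨t, ⟨htQ', htb⟩, hte⟩ := hmem
      have hte' : w + t = u := hte
      refine ⟨φ t, ⟨Set.mem_image_of_mem _ htQ', ?_⟩, ?_⟩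
      · rw [mem_ball_zero_iff]
        have : φ t = φ u - φ w := by rw [← hte', map_add]; abel
        rw [this]
        rw [Metric.mem_ball, dist_eq_norm] at hzb
        exact hzb
      · show φ w + φ t = φ u
        rw [← map_add, hte']
    · rintro ⟨b, ⟨⟨v, hvQ', rfl⟩, hvb⟩, rfl⟩
      rw [mem_ball_zero_iff] at hvb
      have h1 : ‖v‖ < ρ := by
        calc ‖v‖ ≤ c * ‖φ v‖ := hanti v
          _ < c * (ρ / c) := mul_lt_mul_of_pos_left hvb hc
          _ = ρ := by field_simp
      have hmem : w + v ∈ Q ∩ Metric.ball w ρ := by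
        rw [hEq]
        exact ⟨v, ⟨hvQ', mem_ball_zero_iff.2 h1⟩, rfl⟩
      constructor
      · show φ w + φ v ∈ φ '' Q
        rw [← map_add]
        exact Set.mem_image_of_mem _ hmem.1
      · show φ w + φ v ∈ Metric.ball (φ w) (ρ / c)
        exact add_mem_ball_iff.2 hvb

lemma isClosed_image_orthSet {ι : Type} [Fintype ι] [FiniteDimensional ℝ V]
    (φ : EuclideanSpace ℝ ι →ₗ[ℝ] V) (hφ : Function.Injective φ) (S : Set ι) :
    IsClosed (φ '' orthSet S) := by
  have h1 : IsClosed (orthSet S) := by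
    have : orthSet (ι := ι) S = ⋂ j, ⋂ (_ : j ∈ S), {v : EuclideanSpace ℝ ι | 0 ≤ v j} := by
      ext v; simp [orthSet, Set.mem_iInter]
    rw [this]
    refine isClosed_iInter fun j => isClosed_iInter fun _ => ?_
    have hcont : Continuous (fun v : EuclideanSpace ℝ ι => v j) :=
      (EuclideanSpace.proj (𝕜 := ℝ) j).continuous
    exact isClosed_le continuous_const hcont
  exact ((LinearMap.isClosedEmbedding_of_injective
    (LinearMap.ker_eq_bot.mpr hφ)).isClosedMap) _ h1

lemma PolyConic.coneAt_of_mem [FiniteDimensional ℝ V] {K : Set V} (hK : PolyConic K)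
    {p : V} (hp : p ∈ K) : ∃ r T, ConeAt K p r T ∧ PolyConic T := by
  obtain ⟨κ, hκ, ι, hι, S, φ, hinj, rfl⟩ := hK
  haveI : Fintype κ := hκ
  haveI : ∀ i, Fintype (ι i) := hι
  have hchoice : ∀ i : κ, ∃ (ri : ℝ) (Si' : Set (ι i)), 0 < ri ∧
      ((p ∈ φ i '' orthSet (S i)) →
        ConeAt (φ i '' orthSet (S i)) p ri (φ i '' orthSet Si')) ∧
      ((p ∉ φ i '' orthSet (S i)) →
        Metric.ball p ri ∩ φ i '' orthSet (S i) = ∅) := by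
    intro i
    by_cases hpi : p ∈ φ i '' orthSet (S i)
    · obtain ⟨w, hw, hpw⟩ := hpi
      obtain ⟨ρ, hρ, hcone⟩ := orthSet_coneAt (S i) w hw
      obtain ⟨r, hr, hcone'⟩ := coneAt_image (φ i) (hinj i) hcone
      refine ⟨r, {j | j ∈ S i ∧ w j = 0}, hr, fun _ => ?_, fun h => absurd ?_ h⟩
      · rwa [hpw] at hcone'
      · exact ⟨w, hw, hpw⟩
    · have hcl := isClosed_image_orthSet (φ i) (hinj i) (S i)
      have hopen : IsOpen (φ i '' orthSet (S i))ᶜ := hcl.isOpen_compl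
      obtain ⟨ri, hri, hball⟩ := Metric.isOpen_iff.1 hopen p hpi
      refine ⟨ri, S i, hri, fun h => absurd h hpi, fun _ => ?_⟩
      rw [Set.eq_empty_iff_forall_notMem]
      rintro z ⟨hz1, hz2⟩
      exact (hball hz1) hz2
  choose ri Si' hri hconei hdisj using hchoice
  have hne : Nonempty κ := by
    rw [Set.mem_iUnion] at hp
    obtain ⟨i, _⟩ := hp
    exact ⟨i⟩
  have huniv : (Finset.univ : Finset κ).Nonempty := Finset.univ_nonempty
  set r := Finset.univ.inf' huniv ri with hrdef
  have hrpos : 0 < r := by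
    rw [hrdef, Finset.lt_inf'_iff]
    exact fun i _ => hri i
  have hrle : ∀ i, r ≤ ri i := fun i => Finset.inf'_le ri (Finset.mem_univ i)
  set T : Set V := ⋃ i : {i : κ // p ∈ φ i '' orthSet (S i)}, φ i.1 '' orthSet (Si' i.1) with hTdef
  obtain ⟨i₀, hi₀⟩ : ∃ i, p ∈ φ i '' orthSet (S i) := Set.mem_iUnion.1 hp
  have hTcone : IsCone T := by
    constructor
    · exact Set.mem_iUnion.2 ⟨⟨i₀, hi₀⟩, 0, (isCone_orthSet _).1, map_zero _⟩
    · rintro c hc a ha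
      rw [hTdef, Set.mem_iUnion] at ha ⊢
      obtain ⟨i, v, hv, rfl⟩ := ha
      exact ⟨i, c • v, (isCone_orthSet _).2 c hc v hv, map_smul _ c v⟩
  refine ⟨r, T, ⟨hrpos, hTcone, ?_⟩, ?_⟩
  · ext z
    constructor
    · rintro ⟨hzK, hzb⟩
      rw [Set.mem_iUnion] at hzK
      obtain ⟨i, hzi⟩ := hzK
      by_cases hpi : p ∈ φ i '' orthSet (S i)
      · have hcone := ((hconei i) hpi).mono hrpos (hrle i)
        have hmem : z ∈ φ i '' orthSet (S i) ∩ Metric.ball p r := ⟨hzi, hzb⟩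
        rw [hcone.2.2] at hmem
        obtain ⟨t, ⟨htT, htb⟩, rfl⟩ := hmem
        exact ⟨t, ⟨Set.mem_iUnion.2 ⟨⟨i, hpi⟩, htT⟩, htb⟩, rfl⟩
      · exfalso
        have := (hdisj i) hpi
        rw [Set.eq_empty_iff_forall_notMem] at this
        exact this z ⟨Metric.ball_subset_ball (hrle i) hzb, hzi⟩
    · rintro ⟨t, ⟨htT, htb⟩, rfl⟩
      rw [hTdef, Set.mem_iUnion] at htT
      obtain ⟨⟨i, hpi⟩, hti⟩ := htT
      have hcone := ((hconei i) hpi).mono hrpos (hrle i)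
      have hmem : p + t ∈ φ i '' orthSet (S i) ∩ Metric.ball p r := by
        rw [hcone.2.2]
        exact ⟨t, ⟨hti, htb⟩, rfl⟩
      exact ⟨Set.mem_iUnion.2 ⟨i, hmem.1⟩, hmem.2⟩
  · haveI : DecidablePred (fun i : κ => p ∈ φ i '' orthSet (S i)) := fun _ => Classical.dec _
    exact ⟨{i : κ // p ∈ φ i '' orthSet (S i)}, inferInstance, fun i => ι i.1,
      fun i => inferInstance, fun i => Si' i.1, fun i => φ i.1, fun i => hinj i.1, rfl⟩

end Poly

section Bridge

/-- embedding of `ℝ^{N'}` into the first `N'` coordinates of `ℝ^N`. -/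
def embVec (N' N : ℕ) (x : EuclideanSpace ℝ (Fin N')) : EuclideanSpace ℝ (Fin N) :=
  WithLp.toLp 2 (fun i : Fin N => if h : (i : ℕ) < N' then x ⟨i, h⟩ else 0)

lemma euclid_ext {ι : Type} {x y : EuclideanSpace ℝ ι} (h : ∀ i, x i = y i) : x = y :=
  PiLp.ext h

variable {V : Type*} [NormedAddCommGroup V] [InnerProductSpace ℝ V]

/-- the linear map `ℝ^ι → V` sending `v` to `∑ j, v j • g j`. -/
def comboLM {ι : Type} [Fintype ι] (g : ι → V) : EuclideanSpace ℝ ι →ₗ[ℝ] V where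
  toFun v := ∑ j, v j • g j
  map_add' a b := by
    show (∑ j, ((a + b) j) • g j) = _
    simp only [PiLp.add_apply, add_smul]
    rw [Finset.sum_add_distrib]
  map_smul' c a := by
    show (∑ j, ((c • a) j) • g j) = _
    simp only [PiLp.smul_apply, smul_eq_mul, RingHom.id_apply, ← smul_smul]
    rw [← Finset.smul_sum]

lemma comboLM_coord {ι : Type} [Fintype ι] {N : ℕ} (g : ι → EuclideanSpace ℝ (Fin N))
    (v : EuclideanSpace ℝ ι) (i : Fin N) :
    comboLM g v i = ∑ j, v j * g j i := by
  rw [show comboLM g v = ∑ j, v j • g j from rfl, euclid_sum_apply]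
  exact Finset.sum_congr rfl fun j _ => by rw [PiLp.smul_apply, smul_eq_mul]

/-- generators of the cone `C(X) × ℝ^{mm} × {0} ⊆ ℝ^N`. -/
def prodGen (N' N mm : ℕ) (X : Finset (EuclideanSpace ℝ (Fin N'))) :
    ({x // x ∈ X} ⊕ Fin mm) → EuclideanSpace ℝ (Fin N)
  | Sum.inl a => embVec N' N a.1
  | Sum.inr k =>
      if h : N' + (k : ℕ) < N then EuclideanSpace.single (⟨N' + k, h⟩ : Fin N) 1 else 0

lemma prodGen_coord_lo {N' N mm : ℕ} (h1 : N' + mm ≤ N)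
    (X : Finset (EuclideanSpace ℝ (Fin N')))
    (v : EuclideanSpace ℝ ({x // x ∈ X} ⊕ Fin mm)) (i : Fin N) (h : (i : ℕ) < N') :
    comboLM (prodGen N' N mm X) v i = ∑ a : {x // x ∈ X}, v (Sum.inl a) * a.1 ⟨i, h⟩ := by
  rw [comboLM_coord, Fintype.sum_sum_type]
  have e2 : ∑ k : Fin mm, v (Sum.inr k) * prodGen N' N mm X (Sum.inr k) i = 0 := by
    apply Finset.sum_eq_zero
    intro k _
    have hk : N' + (k : ℕ) < N := by omega
    simp only [prodGen, dif_pos hk]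
    rw [EuclideanSpace.single_apply, if_neg, mul_zero]
    intro he
    have hv2 : (i : ℕ) = N' + (k : ℕ) := congrArg Fin.val he
    omega
  rw [e2, add_zero]
  apply Finset.sum_congr rfl
  intro a _
  simp only [prodGen, embVec, WithLp.ofLp_toLp]
  rw [dif_pos h]

lemma prodGen_coord_mid {N' N mm : ℕ} (h1 : N' + mm ≤ N)
    (X : Finset (EuclideanSpace ℝ (Fin N')))
    (v : EuclideanSpace ℝ ({x // x ∈ X} ⊕ Fin mm)) (i : Fin N)
    (hlo : N' ≤ (i : ℕ)) (hhi : (i : ℕ) < N' + mm) :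
    comboLM (prodGen N' N mm X) v i = v (Sum.inr ⟨(i : ℕ) - N', by omega⟩) := by
  rw [comboLM_coord, Fintype.sum_sum_type]
  have e1 : ∑ a : {x // x ∈ X}, v (Sum.inl a) * prodGen N' N mm X (Sum.inl a) i = 0 := by
    apply Finset.sum_eq_zero
    intro a _
    simp only [prodGen, embVec, WithLp.ofLp_toLp]
    rw [dif_neg (by omega), mul_zero]
  have hk₀N : (⟨(i : ℕ) - N', by omega⟩ : Fin mm) = ⟨(i : ℕ) - N', by omega⟩ := rfl
  have e2 : ∑ k : Fin mm, v (Sum.inr k) * prodGen N' N mm X (Sum.inr k) i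
      = v (Sum.inr ⟨(i : ℕ) - N', by omega⟩) := by
    rw [Finset.sum_eq_single (⟨(i : ℕ) - N', by omega⟩ : Fin mm)]
    · have hk : N' + (((⟨(i : ℕ) - N', by omega⟩ : Fin mm)) : ℕ) < N := by
        have : (((⟨(i : ℕ) - N', by omega⟩ : Fin mm)) : ℕ) = (i : ℕ) - N' := rfl
        omega
      simp only [prodGen, dif_pos hk]
      rw [EuclideanSpace.single_apply, if_pos, mul_one]
      apply Fin.ext
      have : (((⟨(i : ℕ) - N', by omega⟩ : Fin mm)) : ℕ) = (i : ℕ) - N' := rfl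
      simp only [this]
      omega
    · intro k _ hk
      have hkN : N' + (k : ℕ) < N := by omega
      simp only [prodGen, dif_pos hkN]
      rw [EuclideanSpace.single_apply, if_neg, mul_zero]
      intro he
      have hv2 : (i : ℕ) = N' + (k : ℕ) := congrArg Fin.val he
      apply hk
      apply Fin.ext
      show (k : ℕ) = (i : ℕ) - N'
      omega
    · intro hmem
      exact absurd (Finset.mem_univ _) hmem
  rw [e1, e2, zero_add]

lemma prodGen_coord_hi {N' N mm : ℕ} (h1 : N' + mm ≤ N)
    (X : Finset (EuclideanSpace ℝ (Fin N')))
    (v : EuclideanSpace ℝ ({x // x ∈ X} ⊕ Fin mm)) (i : Fin N)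
    (h : N' + mm ≤ (i : ℕ)) :
    comboLM (prodGen N' N mm X) v i = 0 := by
  rw [comboLM_coord, Fintype.sum_sum_type]
  have e1 : ∑ a : {x // x ∈ X}, v (Sum.inl a) * prodGen N' N mm X (Sum.inl a) i = 0 := by
    apply Finset.sum_eq_zero
    intro a _
    simp only [prodGen, embVec, WithLp.ofLp_toLp]
    rw [dif_neg (by omega), mul_zero]
  have e2 : ∑ k : Fin mm, v (Sum.inr k) * prodGen N' N mm X (Sum.inr k) i = 0 := by
    apply Finset.sum_eq_zero
    intro k _
    have hk : N' + (k : ℕ) < N := by omega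
    simp only [prodGen, dif_pos hk]
    rw [EuclideanSpace.single_apply, if_neg, mul_zero]
    intro he
    have hv2 : (i : ℕ) = N' + (k : ℕ) := congrArg Fin.val he
    omega
  rw [e1, e2, add_zero]

lemma IsSimpleBase.linearIndependent' {m : ℕ} {X : Finset V} (h : IsSimpleBase m X) :
    LinearIndependent ℝ (fun a : {x // x ∈ X} => (a.1 : V)) := by
  obtain ⟨-, hnorm, haff⟩ := h
  have h0 : ∀ v ∈ (X : Set V), v ≠ 0 := by
    intro v hv hv0
    have h1 := hnorm v (Finset.mem_coe.mp hv)
    rw [hv0, norm_zero] at h1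
    exact one_ne_zero h1.symm
  have hset : ({(0 : V)} ∪ (fun v => v +ᵥ (0 : V)) '' (X : Set V)) = insert (0 : V) (X : Set V) := by
    have himg : (fun v => v +ᵥ (0 : V)) '' (X : Set V) = (X : Set V) := by
      have hid : (fun v : V => v +ᵥ (0 : V)) = id := by
        funext v
        simp [vadd_eq_add]
      rw [hid, Set.image_id]
    rw [himg, Set.insert_eq]
  have haff' : AffineIndependent ℝ
      (fun p => p : ({(0 : V)} ∪ (fun v => v +ᵥ (0 : V)) '' (X : Set V) : Set V) → V) := by
    rw [hset]
    exact haff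
  exact (linearIndependent_set_iff_affineIndependent_vadd_union_singleton ℝ h0 (0 : V)).mpr haff'

lemma prodGen_injective {N' N mm : ℕ} (h1 : N' + mm ≤ N)
    (X : Finset (EuclideanSpace ℝ (Fin N')))
    (hli : LinearIndependent ℝ (fun a : {x // x ∈ X} => (a.1 : EuclideanSpace ℝ (Fin N')))) :
    Function.Injective (comboLM (prodGen N' N mm X)) := by
  have hker : ∀ v, comboLM (prodGen N' N mm X) v = 0 → v = 0 := by
    intro v hv
    have hinr : ∀ k : Fin mm, v (Sum.inr k) = 0 := by
      intro k
      have h2 := prodGen_coord_mid h1 X v ⟨N' + (k : ℕ), by omega⟩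
        (by show N' ≤ N' + (k : ℕ); omega) (by show N' + (k : ℕ) < N' + mm; omega)
      rw [hv] at h2
      have h3 : (0 : EuclideanSpace ℝ (Fin N)) ⟨N' + (k : ℕ), by omega⟩ = 0 := rfl
      have h4 : v (Sum.inr ⟨(((⟨N' + (k : ℕ), by omega⟩ : Fin N)) : ℕ) - N',
            by show N' + (k : ℕ) - N' < mm; omega⟩)
          = v (Sum.inr k) := by
        exact congrArg (fun j => v (Sum.inr j)) (Fin.ext (by show (N' + (k : ℕ)) - N' = (k : ℕ); omega))
      rw [h4] at h2
      rw [h3] at h2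
      exact h2.symm
    have hsum : (∑ a : {x // x ∈ X}, v (Sum.inl a) • (a.1 : EuclideanSpace ℝ (Fin N'))) = 0 := by
      apply euclid_ext
      intro j
      rw [euclid_sum_apply]
      have h2 := prodGen_coord_lo h1 X v ⟨(j : ℕ), by omega⟩ (by exact j.2)
      rw [hv] at h2
      have h3 : (0 : EuclideanSpace ℝ (Fin N)) ⟨(j : ℕ), by omega⟩ = 0 := rfl
      rw [h3] at h2
      have h5 : ∑ a : {x // x ∈ X}, v (Sum.inl a) * a.1 j = 0 := h2.symm
      rw [PiLp.zero_apply]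
      rw [← h5]
      apply Finset.sum_congr rfl
      intro a _
      rw [PiLp.smul_apply, smul_eq_mul]
    have hinl := Fintype.linearIndependent_iff.mp hli (fun a => v (Sum.inl a)) hsum
    apply euclid_ext
    intro j
    rw [PiLp.zero_apply]
    cases j with
    | inl a => exact hinl a
    | inr k => exact hinr k
  intro a b hab
  have h6 : comboLM (prodGen N' N mm X) (a - b) = 0 := by
    rw [map_sub, hab, sub_self]
  have h7 : a - b = 0 := hker _ h6
  exact sub_eq_zero.mp h7

lemma coneSum_coord {N' : ℕ} (X : Finset (EuclideanSpace ℝ (Fin N')))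
    (c : EuclideanSpace ℝ (Fin N') → ℝ) (j : Fin N') :
    (∑ x ∈ X, c x • x) j = ∑ a : {x // x ∈ X}, c a.1 * a.1 j := by
  rw [euclid_sum_apply]
  rw [← Finset.sum_coe_sort X (fun x => (c x • x) j)]
  apply Finset.sum_congr rfl
  intro a _
  rw [PiLp.smul_apply, smul_eq_mul]

lemma prodGen_image {N' N mm : ℕ} (h1 : N' + mm ≤ N)
    (X : Finset (EuclideanSpace ℝ (Fin N'))) :
    prodSet N' N (coneOf X) mm
      = comboLM (prodGen N' N mm X) ''
          orthSet (Set.range (Sum.inl : {x // x ∈ X} → ({x // x ∈ X} ⊕ Fin mm))) := by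
  have hproj : ∀ (y : EuclideanSpace ℝ (Fin N)) (j : Fin N'),
      proj1 N' N y j = y ⟨(j : ℕ), by omega⟩ := by
    intro y j
    simp only [proj1, WithLp.ofLp_toLp]
    rw [dif_pos]
    omega
  ext y
  constructor
  · rintro ⟨hy1, hy2⟩
    obtain ⟨c, hc, hceq⟩ := hy1
    refine ⟨WithLp.toLp 2 (Sum.elim (fun a : {x // x ∈ X} => c a.1) (fun k : Fin mm => y ⟨N' + (k : ℕ), by omega⟩)), ?_, ?_⟩
    · rintro j ⟨a, rfl⟩
      exact hc a.1 a.2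
    · apply euclid_ext
      intro i
      by_cases hiN' : (i : ℕ) < N'
      · rw [prodGen_coord_lo h1 X _ i hiN']
        have e1 : proj1 N' N y ⟨(i : ℕ), hiN'⟩ = y i := hproj y ⟨(i : ℕ), hiN'⟩
        rw [← e1, hceq, coneSum_coord]
        simp only [WithLp.ofLp_toLp, Sum.elim_inl]
      · by_cases hi2 : (i : ℕ) < N' + mm
        · rw [prodGen_coord_mid h1 X _ i (by omega) hi2]
          show y ⟨N' + ((i : ℕ) - N'), by omega⟩ = y i
          exact congrArg y.ofLp (Fin.ext (by show N' + ((i : ℕ) - N') = (i : ℕ); omega))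
        · rw [prodGen_coord_hi h1 X _ i (by omega), hy2 i (by omega)]
  · rintro ⟨vv, hvv, rfl⟩
    constructor
    · refine ⟨fun x => if hx : x ∈ X then vv (Sum.inl ⟨x, hx⟩) else 0, ?_, ?_⟩
      · intro x hx
        show 0 ≤ if hx' : x ∈ X then vv (Sum.inl ⟨x, hx'⟩) else 0
        rw [dif_pos hx]
        exact hvv (Sum.inl ⟨x, hx⟩) ⟨⟨x, hx⟩, rfl⟩
      · apply euclid_ext
        intro j
        rw [hproj, coneSum_coord]
        rw [prodGen_coord_lo h1 X vv ⟨(j : ℕ), by omega⟩ (by exact j.2)]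
        apply Finset.sum_congr rfl
        intro a _
        simp only [dif_pos a.2]
    · intro i hi
      exact prodGen_coord_hi h1 X vv i hi

lemma polyConic_prodSet {N' N mm d : ℕ} (h1 : N' + mm ≤ N)
    (T : ComplexCone (EuclideanSpace ℝ (Fin N')) d) :
    PolyConic (prodSet N' N T.carrier mm) := by
  classical
  refine ⟨{X : Finset (EuclideanSpace ℝ (Fin N')) // X ∈ T.faces}, inferInstance,
    fun X => {x // x ∈ X.1} ⊕ Fin mm, fun X => inferInstance,
    fun X => Set.range (Sum.inl : {x // x ∈ X.1} → ({x // x ∈ X.1} ⊕ Fin mm)),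
    fun X => comboLM (prodGen N' N mm X.1),
    fun X => prodGen_injective h1 X.1 (T.simple X.1 X.2).linearIndependent', ?_⟩
  ext y
  simp only [Set.mem_iUnion]
  constructor
  · rintro ⟨hy1, hy2⟩
    simp only [ComplexCone.carrier, Set.mem_iUnion₂] at hy1
    obtain ⟨X, hXf, hyX⟩ := hy1
    refine ⟨⟨X, hXf⟩, ?_⟩
    rw [← prodGen_image h1 X]
    exact ⟨hyX, hy2⟩
  · rintro ⟨⟨X, hXf⟩, hy⟩
    rw [← prodGen_image h1 X] at hy
    refine ⟨?_, hy.2⟩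
    simp only [ComplexCone.carrier, Set.mem_iUnion₂]
    exact ⟨X, hXf, hy.1⟩

end Bridge

/-- **Proposition 2.12**: completeness of the class of blow-up limits:
`𝒜(𝒜(W)) = 𝒜(W)` for every set `W` of type `m`. -/
theorem statement3
    (n N' N : ℕ) (hn : 0 < n) (hnN' : n < N') (hN'N : N' + n ≤ N)
    (m : ℕ) (hm : m ≤ n)
    (W : Set (EuclideanSpace ℝ (Fin N))) (hW : IsTypeM n N' N m W) :
    calAB (calA W) = calA W := by
  obtain ⟨hmn, C, hCm, hCW⟩ := hW
  have hNm : N' + C.m ≤ N := by have := C.m_le; omega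
  set K : Set (EuclideanSpace ℝ (Fin N)) := prodSet N' N C.T.carrier C.m with hKdef
  have hKpc : PolyConic K := polyConic_prodSet hNm C.T
  have hWK : W = C.R '' K := by rw [← hCW]; rfl
  apply Set.Subset.antisymm
  · -- `𝒜(𝒜(W)) ⊆ 𝒜(W)`
    intro Z' hZ'
    simp only [calAB, Set.mem_iUnion₂] at hZ'
    obtain ⟨Z, hZ, hZ'mem⟩ := hZ'
    obtain ⟨R₁, x₁, hx₁, r₁, hr₁, hst₁, hZdef⟩ := hZ
    obtain ⟨R₂, x₂, hx₂, r₂, hr₂, hst₂, hZ'def⟩ := hZ'mem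
    obtain ⟨p, hpK, hpx⟩ : ∃ p, p ∈ K ∧ C.R p = x₁ := by
      rw [hWK] at hx₁
      obtain ⟨p, hp, he⟩ := hx₁
      exact ⟨p, hp, he⟩
    obtain ⟨ρ, Tp, hconeP, hTpPC⟩ := hKpc.coneAt_of_mem hpK
    set eR := C.R.toRealLinearIsometryEquiv with heR
    have hblowW : ∀ (x : EuclideanSpace ℝ (Fin N)) (r' : ℝ),
        blowUp W (C.R x) r' = eR '' blowUp K x r' := by
      intro x r'
      rw [hWK]
      exact blowUp_image C.R K x r'
    have hA : blowUp W x₁ r₁ = eR '' Tp := by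
      have hmin : 0 < min ρ r₁ := lt_min hconeP.1 hr₁
      rw [← hst₁ (min ρ r₁) hmin (min_le_right _ _), ← hpx, hblowW,
        blowUp_eq_of_coneAt hconeP hmin (min_le_left _ _)]
    set G : EuclideanSpace ℝ (Fin N) ≃ᵢ EuclideanSpace ℝ (Fin N) :=
      (eR.toIsometryEquiv).trans R₁ with hG
    have hZG : Z = G '' Tp := by
      rw [hZdef, hA, Set.image_image]
      rfl
    obtain ⟨q, hqTp, hqx⟩ : ∃ q, q ∈ Tp ∧ G q = x₂ := by
      rw [hZG] at hx₂
      obtain ⟨q, h1, h2⟩ := hx₂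
      exact ⟨q, h1, h2⟩
    obtain ⟨σ, Tq, hconeQ, -⟩ := hTpPC.coneAt_of_mem hqTp
    set eG := G.toRealLinearIsometryEquiv with heG
    have hB : blowUp Z x₂ r₂ = eG '' Tq := by
      have hmin : 0 < min σ r₂ := lt_min hconeQ.1 hr₂
      rw [← hst₂ (min σ r₂) hmin (min_le_right _ _), ← hqx, hZG,
        blowUp_image G Tp q (min σ r₂), blowUp_eq_of_coneAt hconeQ hmin (min_le_left _ _)]
    obtain ⟨x', s', hx'K, hs', hconeX'⟩ := coneAt_shift hconeP hqTp hconeQ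
    have hblow' : ∀ r', 0 < r' → r' ≤ s' → blowUp W (C.R x') r' = eR '' Tq := by
      intro r' h0 hle
      rw [hblowW, blowUp_eq_of_coneAt hconeX' h0 hle]
    refine ⟨((eR.symm.toIsometryEquiv).trans (eG.toIsometryEquiv)).trans R₂, C.R x', ?_,
      s', hs', ?_, ?_⟩
    · rw [hWK]
      exact Set.mem_image_of_mem _ hx'K
    · intro r' h0 hle
      rw [hblow' r' h0 hle, hblow' s' hs' (le_refl _)]
    · rw [hZ'def, hB, hblow' s' hs' (le_refl _), Set.image_image, Set.image_image]
      apply Set.image_congr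
      intro a _
      simp only [IsometryEquiv.trans_apply, LinearIsometryEquiv.coe_toIsometryEquiv,
        LinearIsometryEquiv.symm_apply_apply]
  · -- `𝒜(W) ⊆ 𝒜(𝒜(W))`
    intro Z hZ
    simp only [calAB, Set.mem_iUnion₂]
    refine ⟨Z, hZ, ?_⟩
    obtain ⟨R₁, x₁, hx₁, r₁, hr₁, hst₁, hZdef⟩ := hZ
    have hAcone : IsCone (blowUp W x₁ r₁) := isCone_blowUp hx₁ hr₁
    have h0A : (0 : EuclideanSpace ℝ (Fin N)) ∈ blowUp W x₁ r₁ := hAcone.1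
    set e₁ := R₁.toRealLinearIsometryEquiv with he₁
    have hblowZ : ∀ r' : ℝ, blowUp Z (R₁ 0) r' = e₁ '' blowUp (blowUp W x₁ r₁) 0 r' := by
      intro r'
      rw [hZdef]
      exact blowUp_image R₁ _ 0 r'
    refine ⟨IsometryEquiv.addRight (R₁ 0), R₁ 0, ?_, 1, one_pos, ?_, ?_⟩
    · rw [hZdef]
      exact Set.mem_image_of_mem _ h0A
    · intro r' h0 hle
      rw [hblowZ, hblowZ, blowUp_zero_of_cone hAcone h0, blowUp_zero_of_cone hAcone one_pos]
    · rw [hblowZ, blowUp_zero_of_cone hAcone one_pos, hZdef, Set.image_image]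
      apply Set.image_congr
      intro a _
      rw [IsometryEquiv.addRight_apply, R₁.toRealLinearIsometryEquiv_apply, sub_add_cancel]

end DDTGen
end
end
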